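/- arXiv:1401.1625 — 5 statements merged into one kernel-verified Lean document; each statement's English description precedes it below -/
import Mathlib

section
/- For every positive integer n, the Bell number B_n equals the sum over k from 1 to n of (-1)^(n-k) times (the sum over ℓ from 1 to k of the Lah number L(k,ℓ)) times the Stirling number of the second kind S(n,k). -/
open Finset

/-- Stirling numbers of the second kind. -/
def stirling : ℕ → ℕ → ℕ
  | 0, 0 => 1
  | 0, _ + 1 => 0
  | _ + 1, 0 => 0
  | n + 1, k + 1 => stirling n k + (k + 1) * stirling n (k + 1)

/-- Bell numbers, via the standard binomial recurrence. -/
def bell : ℕ → ℕ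
  | 0 => 1
  | n + 1 => ∑ k ∈ (Finset.range (n + 1)).attach, Nat.choose n k.1 * bell k.1
decreasing_by exact Nat.lt_succ_of_le (Nat.lt_succ_iff.mp (Finset.mem_range.mp k.2))

/-- Lah numbers: L(n,k) = C(n-1,k-1) · n!/k! for k ≥ 1, L(0,0)=1, L(n,0)=0 for n ≥ 1. -/
def lah (n k : ℕ) : ℕ :=
  if k = 0 then (if n = 0 then 1 else 0)
  else (n - 1).choose (k - 1) * Nat.factorial n / Nat.factorial k

/-- Unsigned Stirling numbers of the first kind. -/
def c1 : ℕ → ℕ → ℕ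
  | 0, 0 => 1
  | 0, _ + 1 => 0
  | _ + 1, 0 => 0
  | n + 1, k + 1 => c1 n k + n * c1 n (k + 1)

lemma stirling_zero_right (n : ℕ) : stirling (n + 1) 0 = 0 := rfl
lemma stirling_succ (n k : ℕ) :
    stirling (n + 1) (k + 1) = stirling n k + (k + 1) * stirling n (k + 1) := rfl
lemma c1_succ (n k : ℕ) : c1 (n + 1) (k + 1) = c1 n k + n * c1 n (k + 1) := rfl

lemma stirling_zero (k : ℕ) : stirling 0 k = if k = 0 then 1 else 0 := by
  cases k <;> rfl

lemma c1_zero (k : ℕ) : c1 0 k = if k = 0 then 1 else 0 := by cases k <;> rfl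

lemma c1_zero_right (n : ℕ) : c1 n 0 = if n = 0 then 1 else 0 := by cases n <;> rfl

lemma stirling_eq_zero : ∀ n k, n < k → stirling n k = 0 := by
  intro n
  induction n with
  | zero => intro k h; cases k with
    | zero => omega
    | succ k => rfl
  | succ n ih =>
    intro k h
    cases k with
    | zero => omega
    | succ k =>
      rw [stirling_succ, ih k (by omega), ih (k+1) (by omega)]; ring

lemma c1_eq_zero : ∀ n k, n < k → c1 n k = 0 := by
  intro n
  induction n with
  | zero => intro k h; cases k with
    | zero => omega
    | succ k => rfl
  | succ n ih =>
    intro k h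
    cases k with
    | zero => omega
    | succ k =>
      rw [c1_succ, ih k (by omega), ih (k+1) (by omega)]; ring

/-- Convolution: c1 ∘ stirling. -/
def M (n ℓ : ℕ) : ℕ := ∑ j ∈ range (n + 1), c1 n j * stirling j ℓ

lemma M_zero_right (n : ℕ) : M n 0 = if n = 0 then 1 else 0 := by
  rw [M, Finset.sum_eq_single 0]
  · simp [c1_zero_right, stirling]
  · intro j _ hj
    cases j with
    | zero => omega
    | succ j => simp [stirling_zero_right]
  · simp

lemma M_succ_zero (n : ℕ) : M (n + 1) 0 = 0 := by simp [M_zero_right]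

lemma M_rec (n ℓ : ℕ) : M (n + 1) (ℓ + 1) = M n ℓ + (n + ℓ + 1) * M n (ℓ + 1) := by
  have h1 : M (n + 1) (ℓ + 1)
      = ∑ j ∈ range (n + 1), c1 (n + 1) (j + 1) * stirling (j + 1) (ℓ + 1) := by
    rw [M, Finset.sum_range_succ']
    simp [c1_zero_right]
  have h2 : ∀ j, c1 (n + 1) (j + 1) * stirling (j + 1) (ℓ + 1)
      = c1 n j * stirling j ℓ + (ℓ + 1) * (c1 n j * stirling j (ℓ + 1))
        + n * (c1 n (j + 1) * stirling (j + 1) (ℓ + 1)) := by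
    intro j; rw [c1_succ, stirling_succ]; ring
  rw [h1]
  simp only [h2, Finset.sum_add_distrib, ← Finset.mul_sum]
  have h3 : ∑ j ∈ range (n + 1), c1 n (j + 1) * stirling (j + 1) (ℓ + 1) = M n (ℓ + 1) := by
    have e1 : ∑ j ∈ range (n + 2), c1 n j * stirling j (ℓ + 1) = M n (ℓ + 1) := by
      rw [Finset.sum_range_succ, c1_eq_zero n (n + 1) (by omega)]; simp [M]
    have e2 := Finset.sum_range_succ' (fun j => c1 n j * stirling j (ℓ + 1)) (n + 1)
    rw [e1] at e2
    simpa [stirling] using e2.symm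
  rw [h3, M, M]
  ring

/-- Closed form for Lah numbers as a product. -/
def g (n ℓ : ℕ) : ℕ :=
  if ℓ = 0 then (if n = 0 then 1 else 0)
  else n.choose ℓ * (n - 1).choose (ℓ - 1) * Nat.factorial (n - ℓ)

lemma key (a d : ℕ) :
    (a + 3 + d).choose (a + 2) * (a + 2 + d).choose (a + 1) * Nat.factorial (d + 1) =
      (a + 2 + d).choose (a + 1) * (a + 1 + d).choose a * Nat.factorial (d + 1)
      + (2 * a + 4 + d) * ((a + 2 + d).choose (a + 2) * (a + 1 + d).choose (a + 1)
          * Nat.factorial d) := by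
  have h1 : ((a + 3 + d).choose (a + 2) : ℚ)
      = ((a + 3 + d).factorial : ℚ) / ((a + 2).factorial * (d + 1).factorial) := by
    rw [Nat.cast_choose ℚ (by omega), show a + 3 + d - (a + 2) = d + 1 by omega]
  have h2 : ((a + 2 + d).choose (a + 1) : ℚ)
      = ((a + 2 + d).factorial : ℚ) / ((a + 1).factorial * (d + 1).factorial) := by
    rw [Nat.cast_choose ℚ (by omega), show a + 2 + d - (a + 1) = d + 1 by omega]
  have h3 : ((a + 1 + d).choose a : ℚ)
      = ((a + 1 + d).factorial : ℚ) / (a.factorial * (d + 1).factorial) := by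
    rw [Nat.cast_choose ℚ (by omega), show a + 1 + d - a = d + 1 by omega]
  have h4 : ((a + 2 + d).choose (a + 2) : ℚ)
      = ((a + 2 + d).factorial : ℚ) / ((a + 2).factorial * d.factorial) := by
    rw [Nat.cast_choose ℚ (by omega), show a + 2 + d - (a + 2) = d by omega]
  have h5 : ((a + 1 + d).choose (a + 1) : ℚ)
      = ((a + 1 + d).factorial : ℚ) / ((a + 1).factorial * d.factorial) := by
    rw [Nat.cast_choose ℚ (by omega), show a + 1 + d - (a + 1) = d by omega]
  have f1 : ((a + 3 + d).factorial : ℚ)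
      = (a + 3 + d) * ((a + 2 + d) * (a + 1 + d).factorial) := by
    rw [show a + 3 + d = (a + 2 + d) + 1 by omega, Nat.factorial_succ,
      show a + 2 + d = (a + 1 + d) + 1 from by omega, Nat.factorial_succ]
    push_cast; ring
  have f2 : ((a + 2 + d).factorial : ℚ) = (a + 2 + d) * (a + 1 + d).factorial := by
    rw [show a + 2 + d = (a + 1 + d) + 1 from by omega, Nat.factorial_succ]
    push_cast; ring
  have f3 : ((a + 2).factorial : ℚ) = (a + 2) * ((a + 1) * a.factorial) := by
    rw [Nat.factorial_succ, Nat.factorial_succ]; push_cast; ring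
  have f4 : ((a + 1).factorial : ℚ) = (a + 1) * a.factorial := by
    rw [Nat.factorial_succ]; push_cast; ring
  have f5 : ((d + 1).factorial : ℚ) = (d + 1) * d.factorial := by
    rw [Nat.factorial_succ]; push_cast; ring
  have hA : ((a + 1 + d).factorial : ℚ) ≠ 0 := by positivity
  have hF : (a.factorial : ℚ) ≠ 0 := by positivity
  have hD : (d.factorial : ℚ) ≠ 0 := by positivity
  have goal : ((a + 3 + d).choose (a + 2) * (a + 2 + d).choose (a + 1)
        * Nat.factorial (d + 1) : ℚ)
      = ((a + 2 + d).choose (a + 1) * (a + 1 + d).choose a * Nat.factorial (d + 1)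
        + (2 * a + 4 + d) * ((a + 2 + d).choose (a + 2) * (a + 1 + d).choose (a + 1)
          * Nat.factorial d) : ℚ) := by
    rw [h1, h2, h3, h4, h5, f1, f2, f3, f4, f5]
    field_simp
    ring
  exact_mod_cast goal

lemma g_rec (n ℓ : ℕ) : g (n + 1) (ℓ + 1) = g n ℓ + (n + ℓ + 1) * g n (ℓ + 1) := by
  cases ℓ with
  | zero =>
    cases n with
    | zero => norm_num [g]
    | succ m =>
      simp only [g, if_neg (Nat.one_ne_zero), if_pos rfl, if_neg (Nat.succ_ne_zero m)]
      simp [Nat.choose_one_right, Nat.factorial_succ]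
  | succ a =>
    simp only [g, if_neg (Nat.succ_ne_zero _)]
    rcases Nat.lt_or_ge n (a + 1) with h | h
    · -- n ≤ a : everything vanishes
      rw [Nat.choose_eq_zero_of_lt (by omega : n + 1 < a + 2),
        Nat.choose_eq_zero_of_lt (by omega : n < a + 1),
        Nat.choose_eq_zero_of_lt (by omega : n < a + 2)]
      ring
    rcases Nat.eq_or_lt_of_le h with h1 | h1
    · -- n = a + 1
      subst h1
      rw [Nat.choose_eq_zero_of_lt (by omega : a + 1 < a + 2)]
      simp [Nat.choose_self]
    · -- n ≥ a + 2
      obtain ⟨d, rfl⟩ : ∃ d, n = a + 2 + d := ⟨n - (a + 2), by omega⟩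
      rw [show a + 2 + d + 1 = a + 3 + d by omega,
        show a + 3 + d - 1 = a + 2 + d by omega,
        show a + 1 + 1 - 1 = a + 1 by omega,
        show a + 1 + 1 = a + 2 by omega,
        show a + 3 + d - (a + 2) = d + 1 by omega,
        show a + 2 + d - 1 = a + 1 + d by omega,
        show a + 1 - 1 = a by omega,
        show a + 2 + d - (a + 1) = d + 1 by omega,
        show a + 2 + d - (a + 2) = d by omega,
        show a + 2 + d + (a + 1) + 1 = 2 * a + 4 + d by omega]
      exact key a d

lemma M_eq_g : ∀ n ℓ, M n ℓ = g n ℓ := by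
  intro n
  induction n with
  | zero =>
    intro ℓ
    cases ℓ with
    | zero => simp [M, g, c1, stirling]
    | succ a => simp [M, g, c1, stirling_zero, Nat.choose_eq_zero_of_lt]
  | succ n ih =>
    intro ℓ
    cases ℓ with
    | zero => rw [M_succ_zero]; simp [g]
    | succ a => rw [M_rec, ih, ih, g_rec]

lemma lah_eq_g (n ℓ : ℕ) (hn : 1 ≤ n) : lah n ℓ = g n ℓ := by
  cases ℓ with
  | zero => simp [lah, g]
  | succ a =>
    simp only [lah, g, if_neg (Nat.succ_ne_zero a), Nat.succ_sub_one]
    rcases Nat.lt_or_ge n (a + 1) with h | h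
    · rw [Nat.choose_eq_zero_of_lt (by omega : n - 1 < a),
        Nat.choose_eq_zero_of_lt (by omega : n < a + 1)]
      simp
    · have hfac : n.factorial = n.choose (a + 1) * (a + 1).factorial
          * (n - (a + 1)).factorial :=
        (Nat.choose_mul_factorial_mul_factorial h).symm
      apply Nat.div_eq_of_eq_mul_left (Nat.factorial_pos _)
      rw [hfac]
      ring

lemma stirling_transfer : ∀ n k, stirling (n + 1) (k + 1)
    = ∑ m ∈ range (n + 1), n.choose m * stirling m k := by
  intro n
  induction n with
  | zero =>
    intro k
    cases k <;> simp [stirling]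
  | succ n ih =>
    intro k
    have pascal : ∑ m ∈ range (n + 2), (n + 1).choose m * stirling m k
        = ∑ m ∈ range (n + 2), n.choose m * stirling m k
          + ∑ m ∈ range (n + 1), n.choose m * stirling (m + 1) k := by
      rw [Finset.sum_range_succ' (fun m => (n + 1).choose m * stirling m k) (n + 1)]
      simp only [Nat.choose_succ_succ, Nat.add_mul, Finset.sum_add_distrib]
      rw [Finset.sum_range_succ' (fun m => n.choose m * stirling m k) (n + 1)]
      simp [Nat.choose_zero_right, add_comm, add_left_comm, add_assoc]
    have trunc : ∑ m ∈ range (n + 2), n.choose m * stirling m k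
        = ∑ m ∈ range (n + 1), n.choose m * stirling m k := by
      rw [Finset.sum_range_succ, Nat.choose_eq_zero_of_lt (by omega)]
      simp
    rw [pascal, trunc, ← ih k]
    cases k with
    | zero =>
      have : ∑ m ∈ range (n + 1), n.choose m * stirling (m + 1) 0 = 0 := by
        apply Finset.sum_eq_zero; intro m _; simp [stirling_zero_right]
      rw [this, stirling_succ, stirling_succ]
      simp [stirling_zero_right]
    | succ a =>
      have : ∑ m ∈ range (n + 1), n.choose m * stirling (m + 1) (a + 1)
          = ∑ m ∈ range (n + 1), n.choose m * stirling m a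
            + (a + 1) * ∑ m ∈ range (n + 1), n.choose m * stirling m (a + 1) := by
        rw [Finset.mul_sum, ← Finset.sum_add_distrib]
        apply Finset.sum_congr rfl
        intro m _
        rw [stirling_succ]; ring
      rw [this, ← ih a, ← ih (a + 1), stirling_succ (n + 1) (a + 1), stirling_succ n a]
      ring

lemma bell_eq_sum : ∀ n, bell n = ∑ k ∈ range (n + 1), stirling n k := by
  intro n
  induction n using Nat.strong_induction_on with
  | _ n ih =>
    cases n with
    | zero => simp [bell, stirling]
    | succ n =>
      rw [bell, Finset.sum_attach (range (n + 1)) (fun m => n.choose m * bell m)]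
      have h1 : ∑ m ∈ range (n + 1), n.choose m * bell m
          = ∑ m ∈ range (n + 1), ∑ k ∈ range (n + 1), n.choose m * stirling m k := by
        apply Finset.sum_congr rfl
        intro m hm
        rw [ih m (by exact mem_range.mp hm), Finset.mul_sum]
        have hmn : m + 1 ≤ n + 1 := by have := mem_range.mp hm; omega
        apply Finset.sum_subset (by exact Finset.range_subset_range.mpr hmn)
        intro k _ hk
        rw [stirling_eq_zero m k (by simp at hk ⊢; omega)]
        simp
      rw [h1, Finset.sum_comm]
      have h2 : ∀ k, ∑ m ∈ range (n + 1), n.choose m * stirling m k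
          = stirling (n + 1) (k + 1) := fun k => (stirling_transfer n k).symm
      simp only [h2]
      rw [Finset.sum_range_succ' (fun k => stirling (n + 1) k) (n + 1)]
      simp [stirling_zero_right]

/-- Signed Stirling numbers of the first kind. -/
def sInt (n k : ℕ) : ℤ := (-1) ^ (n + k) * c1 n k

lemma sInt_rec (n k : ℕ) : sInt (n + 1) (k + 1) = sInt n k - n * sInt n (k + 1) := by
  simp only [sInt, c1_succ]
  rw [show n + 1 + (k + 1) = (n + k) + 2 by omega, show n + (k + 1) = (n + k) + 1 by omega,
    pow_add, pow_add]
  push_cast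
  ring

lemma sInt_zero_right (n : ℕ) : sInt n 0 = if n = 0 then 1 else 0 := by
  simp [sInt, c1_zero_right]
  split <;> simp_all

lemma sInt_zero (k : ℕ) : sInt 0 k = if k = 0 then 1 else 0 := by
  unfold sInt
  rw [c1_zero]
  split <;> simp_all

lemma inversion : ∀ n j, (∑ k ∈ range (n + 1), (stirling n k : ℤ) * sInt k j)
    = if n = j then 1 else 0 := by
  intro n
  induction n with
  | zero =>
    intro j
    rw [show (0 : ℕ) + 1 = 1 from rfl, Finset.sum_range_one, sInt_zero,
      show stirling 0 0 = 1 from rfl]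
    split <;> split <;> simp_all [eq_comm]
  | succ n ih =>
    intro j
    have step : ∑ k ∈ range (n + 2), (stirling (n + 1) k : ℤ) * sInt k j
        = ∑ k ∈ range (n + 1), (stirling (n + 1) (k + 1) : ℤ) * sInt (k + 1) j := by
      rw [Finset.sum_range_succ' (fun k => (stirling (n + 1) k : ℤ) * sInt k j) (n + 1)]
      simp [stirling_zero_right]
    rw [step]
    have hsecond : ∑ k ∈ range (n + 1), ((k : ℤ) + 1) * (stirling n (k + 1)) * sInt (k + 1) j
        = ∑ k ∈ range (n + 1), (k : ℤ) * (stirling n k) * sInt k j := by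
      have e2 := Finset.sum_range_succ' (fun k => (k : ℤ) * (stirling n k) * sInt k j) (n + 1)
      rw [Finset.sum_range_succ, stirling_eq_zero n (n + 1) (by omega)] at e2
      simp only [Nat.cast_zero, mul_zero, zero_mul, add_zero, Nat.cast_ofNat] at e2
      push_cast at e2
      exact e2.symm
    cases j with
    | zero =>
      have : ∀ k, sInt (k + 1) 0 = 0 := by
        intro k; rw [sInt_zero_right]; simp
      simp [this]
    | succ j =>
      have expand : ∀ k ∈ range (n + 1),
          (stirling (n + 1) (k + 1) : ℤ) * sInt (k + 1) (j + 1)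
          = (stirling n k : ℤ) * sInt k j - (k : ℤ) * (stirling n k) * sInt k (j + 1)
            + (((k : ℤ) + 1) * (stirling n (k + 1)) * sInt (k + 1) (j + 1)) := by
        intro k _
        rw [stirling_succ, sInt_rec]
        push_cast
        ring
      rw [Finset.sum_congr rfl expand]
      simp only [Finset.sum_add_distrib, Finset.sum_sub_distrib, hsecond]
      have : ∑ k ∈ range (n + 1), (k : ℤ) * (stirling n k) * sInt k (j + 1)
          = ∑ k ∈ range (n + 1), (k : ℤ) * (stirling n k) * sInt k (j + 1) := rfl
      rw [ih j]
      have hsplit : (if n = j then (1 : ℤ) else 0) = if n + 1 = j + 1 then 1 else 0 := by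
        split <;> split <;> omega
      rw [hsplit]
      ring

lemma sum_range_succ_eq_Icc {A : Type*} [AddCommMonoid A] (f : ℕ → A) (k : ℕ) :
    ∑ x ∈ range (k + 1), f x = f 0 + ∑ x ∈ Icc 1 k, f x := by
  induction k with
  | zero => simp
  | succ k ih =>
    rw [Finset.sum_range_succ, ih, Finset.sum_Icc_succ_top (by omega : 1 ≤ k + 1)]
    rw [add_assoc]

lemma sum_lah_nat (k : ℕ) (hk : 1 ≤ k) :
    ∑ ℓ ∈ Icc 1 k, lah k ℓ = ∑ j ∈ range (k + 1), c1 k j * bell j := by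
  have h1 : ∀ ℓ, lah k ℓ = M k ℓ := fun ℓ => by rw [lah_eq_g k ℓ hk, M_eq_g]
  have h2 : ∑ ℓ ∈ range (k + 1), M k ℓ = M k 0 + ∑ ℓ ∈ Icc 1 k, M k ℓ :=
    sum_range_succ_eq_Icc (M k) k
  have h3 : M k 0 = 0 := by rw [M_zero_right]; simp; omega
  have h4 : ∑ ℓ ∈ Icc 1 k, lah k ℓ = ∑ ℓ ∈ range (k + 1), M k ℓ := by
    simp only [h1]; omega
  rw [h4]
  unfold M
  rw [Finset.sum_comm]
  apply Finset.sum_congr rfl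
  intro j hj
  rw [← Finset.mul_sum, bell_eq_sum]
  congr 1
  symm
  apply Finset.sum_subset (Finset.range_subset_range.mpr (by simp at hj; omega))
  intro ℓ _ hℓ
  exact stirling_eq_zero j ℓ (by simp at hℓ ⊢; omega)

lemma neg_one_pow_sub (n k : ℕ) (h : k ≤ n) :
    ((-1 : ℤ)) ^ (n - k) = (-1) ^ n * (-1) ^ k := by
  obtain ⟨d, rfl⟩ : ∃ d, n = k + d := ⟨n - k, by omega⟩
  rw [show k + d - k = d by omega, pow_add]
  have : (-1 : ℤ) ^ k * (-1) ^ d * (-1) ^ k = ((-1) ^ k * (-1) ^ k) * (-1) ^ d := by ring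
  rw [this, ← pow_add, Even.neg_one_pow ⟨k, rfl⟩, one_mul]

theorem bell_eq_sum_lah_stirling (n : ℕ) (hn : 1 ≤ n) :
    (bell n : ℤ) =
      ∑ k ∈ Finset.Icc 1 n,
        (-1 : ℤ) ^ (n - k) * (∑ ℓ ∈ Finset.Icc 1 k, (lah k ℓ : ℤ)) * stirling n k := by
  have hrhs : ∑ k ∈ Finset.Icc 1 n,
        (-1 : ℤ) ^ (n - k) * (∑ ℓ ∈ Finset.Icc 1 k, (lah k ℓ : ℤ)) * stirling n k
      = ∑ k ∈ range (n + 1),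
        (-1 : ℤ) ^ (n - k) * (∑ ℓ ∈ Finset.Icc 1 k, (lah k ℓ : ℤ)) * stirling n k := by
    rw [sum_range_succ_eq_Icc
      (fun k => (-1 : ℤ) ^ (n - k) * (∑ ℓ ∈ Finset.Icc 1 k, (lah k ℓ : ℤ)) * stirling n k) n]
    have : stirling n 0 = 0 := by
      cases n with
      | zero => omega
      | succ m => exact stirling_zero_right m
    simp [this]
  rw [hrhs]
  have hterm : ∀ k ∈ range (n + 1),
      (-1 : ℤ) ^ (n - k) * (∑ ℓ ∈ Finset.Icc 1 k, (lah k ℓ : ℤ)) * stirling n k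
      = ∑ j ∈ range (n + 1),
          ((bell j : ℤ) * ((stirling n k : ℤ) * ((-1 : ℤ) ^ n * (-1 : ℤ) ^ j * sInt k j)) ) := by
    intro k hk
    rcases Nat.eq_zero_or_pos k with rfl | hkpos
    · -- k = 0 : stirling n 0 = 0
      have h0 : stirling n 0 = 0 := by
        cases n with
        | zero => omega
        | succ m => exact stirling_zero_right m
      simp [h0, sInt]
    · have hkn : k + 1 ≤ n + 1 := by simp at hk; omega
      have hsum : (∑ ℓ ∈ Finset.Icc 1 k, (lah k ℓ : ℤ))
          = ∑ j ∈ range (n + 1), (c1 k j : ℤ) * bell j := by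
        have h0 : ∑ j ∈ range (k + 1), (c1 k j : ℤ) * bell j
            = ∑ j ∈ range (n + 1), (c1 k j : ℤ) * bell j := by
          apply Finset.sum_subset (Finset.range_subset_range.mpr hkn)
          intro j _ hj
          rw [c1_eq_zero k j (by simp at hj ⊢; omega)]
          simp
        rw [← h0]
        exact_mod_cast congrArg (fun x : ℕ => (x : ℤ)) (sum_lah_nat k hkpos)
      rw [hsum, neg_one_pow_sub n k (by omega), Finset.mul_sum, Finset.sum_mul]
      apply Finset.sum_congr rfl
      intro j _
      have hc : ((-1 : ℤ)) ^ k * (c1 k j : ℤ) = (-1) ^ j * sInt k j := by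
        unfold sInt
        rw [pow_add]
        have : (-1 : ℤ) ^ j * ((-1) ^ k * (-1) ^ j * (c1 k j : ℤ))
            = ((-1) ^ j * (-1) ^ j) * ((-1) ^ k * (c1 k j : ℤ)) := by ring
        rw [this, ← pow_add, Even.neg_one_pow ⟨j, rfl⟩, one_mul]
      calc (-1 : ℤ) ^ n * (-1 : ℤ) ^ k * ((c1 k j : ℤ) * bell j) * stirling n k
          = (bell j : ℤ) * ((stirling n k : ℤ)
              * ((-1 : ℤ) ^ n * ((-1 : ℤ) ^ k * (c1 k j : ℤ)))) := by ring
        _ = _ := by rw [hc]; ring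
  rw [Finset.sum_congr rfl hterm, Finset.sum_comm]
  have hfinal : ∀ j ∈ range (n + 1),
      ∑ k ∈ range (n + 1),
        (bell j : ℤ) * ((stirling n k : ℤ) * ((-1 : ℤ) ^ n * (-1 : ℤ) ^ j * sInt k j))
      = (bell j : ℤ) * ((-1 : ℤ) ^ n * (-1 : ℤ) ^ j) * (if n = j then 1 else 0) := by
    intro j _
    rw [← Finset.mul_sum]
    have : ∑ k ∈ range (n + 1), (stirling n k : ℤ) * ((-1 : ℤ) ^ n * (-1 : ℤ) ^ j * sInt k j)
        = ((-1 : ℤ) ^ n * (-1 : ℤ) ^ j) * ∑ k ∈ range (n + 1), (stirling n k : ℤ) * sInt k j := by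
      rw [Finset.mul_sum]
      apply Finset.sum_congr rfl
      intro k _
      ring
    rw [this, inversion n j]
    ring
  rw [Finset.sum_congr rfl hfinal]
  rw [Finset.sum_eq_single n]
  · simp [← pow_add, Even.neg_one_pow (⟨n, rfl⟩ : Even (n + n))]
  · intro j _ hj
    simp [Ne.symm hj]
  · intro h
    simp at h
end

section
/- For every positive integer n and real t ≠ 0, the n-th derivative of the function t ↦ e^(1/t) equals (-1)^n · e^(1/t) · Σ_{k=1}^{n} L(n,k) / t^(n+k), where L(n,k) = C(n-1,k-1)·n!/k! are the Lah numbers. -/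
open Finset

lemma lah_zero (n : ℕ) (hn : 1 ≤ n) : lah n 0 = 0 := by
  simp [lah]; omega

lemma fac_dvd (n k : ℕ) (hn : 1 ≤ n) (hk : 1 ≤ k) :
    Nat.factorial k ∣ (n - 1).choose (k - 1) * Nat.factorial n := by
  rcases le_or_gt k n with h | h
  · exact Dvd.dvd.mul_left (Nat.factorial_dvd_factorial h) _
  · have : (n - 1).choose (k - 1) = 0 := Nat.choose_eq_zero_of_lt (by omega)
    simp [this]

lemma lah_mul_fac (n k : ℕ) (hn : 1 ≤ n) (hk : 1 ≤ k) :
    lah n k * Nat.factorial k = (n - 1).choose (k - 1) * Nat.factorial n := by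
  rw [lah, if_neg (by omega)]
  exact Nat.div_mul_cancel (fac_dvd n k hn hk)

lemma lah_eq_zero (n k : ℕ) (hn : 1 ≤ n) (h : n < k) : lah n k = 0 := by
  rw [lah, if_neg (by omega), Nat.choose_eq_zero_of_lt (by omega)]
  simp

lemma lah_succ (n k : ℕ) (hn : 1 ≤ n) (hk : 1 ≤ k) :
    lah (n + 1) k = (n + k) * lah n k + lah n (k - 1) := by
  have hfac : 0 < Nat.factorial k := Nat.factorial_pos k
  apply Nat.eq_of_mul_eq_mul_right hfac
  rw [lah_mul_fac (n+1) k (by omega) hk]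
  rcases eq_or_lt_of_le hk with h1 | h2
  · -- k = 1
    have h1' : k = 1 := h1.symm
    subst h1'
    have hl : lah n 1 = Nat.factorial n := by
      simpa using lah_mul_fac n 1 hn le_rfl
    simp [lah_zero n hn, hl, Nat.factorial_succ]
  · -- k ≥ 2
    have hk2 : 2 ≤ k := h2
    have hfacs : Nat.factorial k = k * Nat.factorial (k-1) := by
      rw [show k = (k-1)+1 by omega, Nat.factorial_succ]; simp
    have e1 : ((n + k) * lah n k + lah n (k-1)) * Nat.factorial k
        = (n + k) * ((n-1).choose (k-1) * Nat.factorial n)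
          + k * ((n-1).choose (k-2) * Nat.factorial n) := by
      rw [add_mul, mul_assoc, lah_mul_fac n k hn hk, hfacs]
      have : lah n (k-1) * (k * Nat.factorial (k-1)) = k * (lah n (k-1) * Nat.factorial (k-1)) := by ring
      rw [this, lah_mul_fac n (k-1) hn (by omega), show k - 1 - 1 = k - 2 by omega]
    rw [e1]
    -- goal: (n+1-1).choose (k-1) * (n+1)! = (n+k)*A*n! + k*B*n!  where A = C(n-1,k-1), B = C(n-1,k-2)
    have hp : n.choose (k-1) = (n-1).choose (k-2) + (n-1).choose (k-1) := by
      rw [show k - 1 = (k-2)+1 by omega, show n = (n-1)+1 by omega]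
      exact Nat.choose_succ_succ _ _
    have hns : Nat.factorial (n+1) = (n+1) * Nat.factorial n := Nat.factorial_succ n
    set A := (n-1).choose (k-1) with hA
    set B := (n-1).choose (k-2) with hB
    have key : A * (k-1) = B * (n - 1 - (k - 2)) := by
      rw [hA, hB, show k - 1 = (k-2)+1 by omega]
      exact Nat.choose_succ_right_eq _ _
    simp only [Nat.add_sub_cancel]
    rw [hp, hns]
    rcases le_or_gt k (n+1) with hle | hgt
    · have hsub : n - 1 - (k - 2) = n + 1 - k := by omega
      rw [hsub] at key
      zify [show k ≤ n + 1 from hle, show 1 ≤ k from hk] at key ⊢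
      linear_combination -(Nat.factorial n : ℤ) * key
    · have hA0 : A = 0 := Nat.choose_eq_zero_of_lt (by omega)
      have hB0 : B = 0 := Nat.choose_eq_zero_of_lt (by omega)
      simp [hA0, hB0]

lemma hasDeriv_exp_inv (t : ℝ) (ht : t ≠ 0) :
    HasDerivAt (fun t : ℝ => Real.exp (1 / t)) (-(Real.exp (1/t) * (t^2)⁻¹)) t := by
  have h1 : HasDerivAt (fun t : ℝ => 1 / t) (-(t^2)⁻¹) t := by
    simpa using (hasDerivAt_inv ht)
  simpa [mul_comm, mul_neg] using h1.exp

lemma hasDeriv_summand (m : ℤ) (t : ℝ) (ht : t ≠ 0) :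
    HasDerivAt (fun t : ℝ => Real.exp (1 / t) * t ^ (-m))
      (-(Real.exp (1/t) * (t ^ (-m - 2) + m * t ^ (-m - 1)))) t := by
  have h2 : HasDerivAt (fun t : ℝ => t ^ (-m)) ((-m : ℝ) * t ^ (-m - 1)) t := by
    simpa using hasDerivAt_zpow (-m) t (Or.inl ht)
  have h : HasDerivAt (fun t : ℝ => Real.exp (1 / t) * t ^ (-m)) _ t := (hasDeriv_exp_inv t ht).mul h2
  convert h using 1
  have e2 : ((t:ℝ)^2)⁻¹ = t ^ (-2:ℤ) := by
    rw [← zpow_natCast t 2, ← zpow_neg]; norm_num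
  have e3 : (t:ℝ)^(-2:ℤ) * t^(-m) = t^(-m-2) := by
    rw [← zpow_add₀ ht]; ring_nf
  rw [e2]
  linear_combination (Real.exp (1/t)) * e3

lemma sum_id (n : ℕ) (hn : 1 ≤ n) (t : ℝ) (ht : t ≠ 0) :
    ∑ k ∈ Icc 1 (n+1), (lah (n+1) k : ℝ) * t ^ (-(n+1+k : ℤ)) =
    ∑ k ∈ Icc 1 n, (lah n k : ℝ) *
      (t ^ (-(n+k : ℤ) - 2) + (n+k : ℝ) * t ^ (-(n+k : ℤ) - 1)) := by
  have step1 : ∑ k ∈ Icc 1 (n+1), (lah (n+1) k : ℝ) * t ^ (-(n+1+k : ℤ)) =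
      (∑ k ∈ Icc 1 (n+1), ((n+k : ℝ) * (lah n k : ℝ)) * t ^ (-(n+1+k : ℤ)))
      + ∑ k ∈ Icc 1 (n+1), (lah n (k-1) : ℝ) * t ^ (-(n+1+k : ℤ)) := by
    rw [← Finset.sum_add_distrib]
    apply Finset.sum_congr rfl
    intro k hk
    rw [Finset.mem_Icc] at hk
    rw [lah_succ n k hn hk.1]
    push_cast
    ring
  -- first sum: drop top term
  have s1 : ∑ k ∈ Icc 1 (n+1), ((n+k : ℝ) * (lah n k : ℝ)) * t ^ (-(n+1+k : ℤ)) =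
      ∑ k ∈ Icc 1 n, ((n+k : ℝ) * (lah n k : ℝ)) * t ^ (-(n+1+k : ℤ)) := by
    rw [Finset.sum_Icc_succ_top (by omega : 1 ≤ n + 1)]
    rw [lah_eq_zero n (n+1) hn (by omega)]
    simp
  -- second sum: reindex
  have A : ∀ (g : ℕ → ℝ) (m : ℕ), ∑ k ∈ Icc 1 m, g k = ∑ x ∈ Finset.range m, g (x+1) := by
    intro g m
    rw [← Finset.Ico_add_one_right_eq_Icc, ← Finset.sum_Ico_add' g 0 m 1, Finset.range_eq_Ico]
  have s2 : ∑ k ∈ Icc 1 (n+1), (lah n (k-1) : ℝ) * t ^ (-(n+1+k : ℤ)) =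
      ∑ k ∈ Icc 1 n, (lah n k : ℝ) * t ^ (-(n+2+k : ℤ)) := by
    rw [A, A, Finset.sum_range_succ']
    simp only [Nat.add_sub_cancel]
    rw [lah_zero n hn]
    simp only [Nat.cast_zero, zero_mul, add_zero]
    apply Finset.sum_congr rfl
    intro i hi
    congr 2
    push_cast
    ring
  rw [step1, s1, s2, ← Finset.sum_add_distrib]
  apply Finset.sum_congr rfl
  intro k hk
  have e1 : (-(n+1+k : ℤ)) = -(n+k : ℤ) - 1 := by push_cast; ring
  have e2 : (-(n+2+k : ℤ)) = -(n+k : ℤ) - 2 := by push_cast; ring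
  rw [e1, e2]
  ring

noncomputable def F (n : ℕ) (t : ℝ) : ℝ :=
  (-1 : ℝ)^n * ∑ k ∈ Icc 1 n, (lah n k : ℝ) * (Real.exp (1/t) * t ^ (-(n+k : ℤ)))

lemma F_hasDeriv (n : ℕ) (hn : 1 ≤ n) (t : ℝ) (ht : t ≠ 0) :
    HasDerivAt (F n) (F (n+1) t) t := by
  have hsum : HasDerivAt
      (fun s : ℝ => ∑ k ∈ Icc 1 n, (lah n k : ℝ) * (Real.exp (1/s) * s ^ (-(n+k : ℤ))))
      (∑ k ∈ Icc 1 n, (lah n k : ℝ) *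
        (-(Real.exp (1/t) * (t ^ (-(n+k : ℤ) - 2) + (n+k : ℝ) * t ^ (-(n+k : ℤ) - 1))))) t := by
    apply HasDerivAt.fun_sum
    intro k hk
    have h : HasDerivAt (fun s : ℝ => (lah n k : ℝ) * (Real.exp (1/s) * s ^ (-(n+k : ℤ)))) _ t := (hasDeriv_summand ((n:ℤ)+k) t ht).const_mul (lah n k : ℝ)
    refine h.congr_deriv ?_
    push_cast
    ring
  have h := hsum.const_mul ((-1 : ℝ)^n)
  have heq : (-1 : ℝ)^n * (∑ k ∈ Icc 1 n, (lah n k : ℝ) *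
        (-(Real.exp (1/t) * (t ^ (-(n+k : ℤ) - 2) + (n+k : ℝ) * t ^ (-(n+k : ℤ) - 1)))))
      = F (n+1) t := by
    rw [F]
    push_cast
    rw [show ∑ x ∈ Icc 1 (n+1), (lah (n+1) x : ℝ) * (Real.exp (1/t) * t ^ (-((n:ℤ)+1+(x:ℤ)))) =
        Real.exp (1/t) * ∑ x ∈ Icc 1 (n+1), (lah (n+1) x : ℝ) * t ^ (-((n:ℤ)+1+(x:ℤ))) from by
      rw [Finset.mul_sum]; exact Finset.sum_congr rfl fun k _ => by ring]
    rw [sum_id n hn t ht, Finset.mul_sum, Finset.mul_sum, Finset.mul_sum]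
    exact Finset.sum_congr rfl fun k _ => by ring
  rw [← heq]
  exact h

theorem iteratedDeriv_exp_one_div (n : ℕ) (hn : 1 ≤ n) (t : ℝ) (ht : t ≠ 0) :
    iteratedDeriv n (fun t : ℝ => Real.exp (1 / t)) t =
      (-1 : ℝ) ^ n * Real.exp (1 / t) *
        ∑ k ∈ Finset.Icc 1 n, (lah n k : ℝ) / t ^ (n + k) := by
  have key : ∀ m : ℕ, 1 ≤ m → ∀ s : ℝ, s ≠ 0 →
      iteratedDeriv m (fun t : ℝ => Real.exp (1 / t)) s = F m s := by
    intro m hm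
    induction m with
    | zero => omega
    | succ p ih =>
      intro s hs
      rcases Nat.eq_zero_or_pos p with hp | hp
      · subst hp
        rw [iteratedDeriv_one, (hasDeriv_exp_inv s hs).deriv]
        have hl : lah 1 1 = 1 := by simp [lah, Nat.factorial]
        rw [F]
        simp only [Finset.Icc_self, Finset.sum_singleton, hl, Nat.cast_one, one_mul, pow_one]
        have e2 : (s:ℝ) ^ (-(((0+1:ℕ):ℤ) + 1)) = (s^2)⁻¹ := by
          rw [show (-(((0+1:ℕ):ℤ) + 1)) = (-2:ℤ) from by norm_num, zpow_neg]
          norm_cast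
        rw [e2]
        ring
      · rw [iteratedDeriv_succ]
        have hev : iteratedDeriv p (fun t : ℝ => Real.exp (1 / t)) =ᶠ[nhds s] F p := by
          filter_upwards [eventually_ne_nhds hs] with x hx using ih hp x hx
        rw [hev.deriv_eq, (F_hasDeriv p hp s hs).deriv]
  rw [key n hn t ht, F, Finset.mul_sum, Finset.mul_sum]
  apply Finset.sum_congr rfl
  intro k hk
  have e : (t : ℝ) ^ (-(n+k : ℤ)) = (t ^ (n+k))⁻¹ := by
    rw [zpow_neg]
    norm_cast
  rw [e]
  ring
end

section
/- The function e^(e^x - 1) is the exponential generating function of the Bell numbers: for all real x, e^(e^x - 1) = Σ_{k=0}^{∞} B_k · x^k / k!, where B_k is the k-th Bell number. -/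
open Finset

lemma exp_tsum (x : ℝ) : Real.exp x = ∑' n : ℕ, x ^ n / n.factorial := by
  rw [Real.exp_eq_exp_ℝ, NormedSpace.exp_eq_tsum_div]

lemma summA (k : ℕ) : Summable (fun n : ℕ => (n : ℝ) ^ k / n.factorial) := by
  refine Summable.of_nonneg_of_le
    (f := fun n : ℕ => (k.factorial : ℝ) * (Real.exp 1 ^ n / n.factorial))
    (fun n => by positivity) ?_ ?_
  · intro n
    rw [div_le_iff₀ (by positivity : (0:ℝ) < n.factorial)]
    have h1 : (n : ℝ) ^ k / k.factorial ≤ Real.exp n :=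
      Real.pow_div_factorial_le_exp (n : ℝ) (by positivity) k
    have h2 : Real.exp (n : ℝ) = Real.exp 1 ^ n := by
      rw [← Real.exp_nat_mul]; ring_nf
    have hk : (0:ℝ) < k.factorial := by positivity
    have h3 : (k.factorial:ℝ) * (Real.exp 1 ^ n / n.factorial) * n.factorial
        = k.factorial * Real.exp 1 ^ n := by field_simp
    rw [h3, ← h2]
    rw [div_le_iff₀ hk] at h1
    linarith
  · exact ((Real.summable_pow_div_factorial (Real.exp 1)).mul_left _)

lemma dob : ∀ k : ℕ, (∑' n : ℕ, (n : ℝ) ^ k / n.factorial) = Real.exp 1 * bell k := by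
  intro k
  induction k using Nat.strong_induction_on with
  | _ k IH =>
    match k with
    | 0 =>
      simp only [pow_zero, bell, Nat.cast_one, mul_one]
      rw [exp_tsum 1]
      refine tsum_congr fun n => ?_
      rw [one_pow]
    | k + 1 =>
      have h0 : (∑' n : ℕ, (n : ℝ) ^ (k+1) / n.factorial)
          = ∑' n : ℕ, ((n : ℝ) + 1) ^ k / n.factorial := by
        rw [Summable.tsum_eq_zero_add (summA (k+1))]
        simp only [Nat.cast_zero, zero_pow (Nat.succ_ne_zero k), zero_div, zero_add]
        refine tsum_congr fun n => ?_
        rw [Nat.factorial_succ]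
        push_cast
        rw [pow_succ']
        have hn : ((n:ℝ) + 1) ≠ 0 := by positivity
        field_simp
      have h1 : ∀ n : ℕ, ((n : ℝ) + 1) ^ k / n.factorial
          = ∑ j ∈ range (k+1), (k.choose j : ℝ) * ((n:ℝ) ^ j / n.factorial) := by
        intro n
        rw [add_pow]
        rw [Finset.sum_div]
        refine Finset.sum_congr rfl fun j hj => ?_
        rw [one_pow]
        ring
      rw [h0]
      calc (∑' n : ℕ, ((n : ℝ) + 1) ^ k / n.factorial)
          = ∑' n : ℕ, ∑ j ∈ range (k+1), (k.choose j : ℝ) * ((n:ℝ) ^ j / n.factorial) :=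
            tsum_congr h1
        _ = ∑ j ∈ range (k+1), ∑' n : ℕ, (k.choose j : ℝ) * ((n:ℝ) ^ j / n.factorial) :=
            Summable.tsum_finsetSum (fun j _ => (summA j).mul_left _)
        _ = ∑ j ∈ range (k+1), (k.choose j : ℝ) * (Real.exp 1 * bell j) := by
            refine Finset.sum_congr rfl fun j hj => ?_
            rw [tsum_mul_left, IH j (Finset.mem_range.mp hj)]
        _ = Real.exp 1 * bell (k+1) := by
            rw [show bell (k+1) = ∑ p ∈ (Finset.range (k + 1)).attach,
                  Nat.choose k p.1 * bell p.1 from by rw [bell]]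
            rw [Finset.sum_attach (range (k+1)) (fun i => Nat.choose k i * bell i)]
            push_cast
            rw [Finset.mul_sum]
            exact Finset.sum_congr rfl fun j _ => by ring

theorem bell_egf (x : ℝ) :
    Real.exp (Real.exp x - 1) =
      ∑' k : ℕ, (bell k : ℝ) * x ^ k / (Nat.factorial k : ℝ) := by
  set f : ℕ → ℕ → ℝ := fun n k => ((n:ℝ) ^ k / n.factorial) * (x ^ k / k.factorial) with hf
  have habs : Summable fun p : ℕ × ℕ =>
      (((p.1:ℝ) * |x|) ^ p.2 / p.2.factorial) / p.1.factorial := by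
    rw [summable_prod_of_nonneg (fun p => by positivity)]
    constructor
    · exact fun n => (Real.summable_pow_div_factorial ((n:ℝ) * |x|)).div_const (n.factorial : ℝ)
    · have : ∀ n : ℕ, (∑' k : ℕ, (((n:ℝ) * |x|) ^ k / k.factorial) / n.factorial)
          = Real.exp |x| ^ n / n.factorial := by
        intro n
        rw [tsum_div_const, ← exp_tsum]
        congr 1
        rw [← Real.exp_nat_mul, mul_comm]
      simpa only [this] using Real.summable_pow_div_factorial (Real.exp |x|)
  have hsum : Summable (Function.uncurry fun n k => f n k) := by
    refine Summable.of_abs ?_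
    refine habs.congr fun p => ?_
    simp only [Function.uncurry, hf, abs_div, abs_mul, abs_pow, abs_mul]
    rw [mul_pow, abs_of_nonneg (by positivity : (0:ℝ) ≤ ((p.1 : ℕ) : ℝ)),
      abs_of_nonneg (by positivity : (0:ℝ) ≤ ((p.2.factorial : ℕ) : ℝ)),
      abs_of_nonneg (by positivity : (0:ℝ) ≤ ((p.1.factorial : ℕ) : ℝ))]
    ring
  have hrow : ∀ n : ℕ, Summable (f n) := fun n =>
    (hsum.prod_factor n)
  have hcol : ∀ k : ℕ, Summable fun n => f n k := fun k =>
    ((summA k).mul_right _)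
  have key : (∑' k : ℕ, Real.exp 1 * ((bell k : ℝ) * x ^ k / k.factorial))
      = Real.exp (Real.exp x) := by
    have step1 : ∀ k : ℕ, Real.exp 1 * ((bell k : ℝ) * x ^ k / k.factorial)
        = ∑' n : ℕ, f n k := by
      intro k
      rw [hf]
      simp only []
      rw [tsum_mul_right, dob k]
      ring
    calc (∑' k : ℕ, Real.exp 1 * ((bell k : ℝ) * x ^ k / k.factorial))
        = ∑' (k : ℕ) (n : ℕ), f n k := tsum_congr step1
      _ = ∑' (n : ℕ) (k : ℕ), f n k := Summable.tsum_comm' hsum hrow hcol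
      _ = ∑' n : ℕ, Real.exp ((n:ℝ) * x) / n.factorial := by
          refine tsum_congr fun n => ?_
          rw [exp_tsum ((n:ℝ) * x), ← tsum_div_const]
          refine tsum_congr fun k => ?_
          simp only [hf]
          rw [mul_pow]
          ring
      _ = ∑' n : ℕ, Real.exp x ^ n / n.factorial := by
          refine tsum_congr fun n => ?_
          rw [← Real.exp_nat_mul]
      _ = Real.exp (Real.exp x) := (exp_tsum (Real.exp x)).symm
  have := key
  rw [tsum_mul_left] at this
  have hexp : Real.exp 1 ≠ 0 := Real.exp_ne_zero 1
  rw [Real.exp_sub]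
  field_simp
  rw [mul_comm]
  rw [← this]; ring
end

section
/- For every positive integer n and real x, the n-th derivative with respect to x of e^(e^(-x)) equals e^(e^(-x)) · Σ_{k=1}^{n} (-1)^k · (Σ_{ℓ=1}^{k} L(k,ℓ) · e^(-ℓx)) · S(n,k), where L(k,ℓ) are Lah numbers and S(n,k) are Stirling numbers of the second kind. -/
open Finset

lemma stirling_eq_zero_of_lt : ∀ {n k : ℕ}, n < k → stirling n k = 0
  | 0, _ + 1, _ => rfl
  | n + 1, k + 1, h => by
    simp [stirling, stirling_eq_zero_of_lt (Nat.lt_of_succ_lt_succ h),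
      stirling_eq_zero_of_lt (Nat.lt_of_succ_lt h)]

lemma lah_mul_factorial (n k : ℕ) (hk : 1 ≤ k) :
    lah n k * k.factorial = (n - 1).choose (k - 1) * n.factorial := by
  have hdvd : k.factorial ∣ (n - 1).choose (k - 1) * n.factorial := by
    rcases le_or_gt k n with h | h
    · exact Dvd.dvd.mul_left (Nat.factorial_dvd_factorial h) _
    · rcases Nat.eq_or_lt_of_le hk with rfl | hk2
      · simp [Dvd.intro _ rfl]
      · have : n - 1 < k - 1 := by omega
        rw [Nat.choose_eq_zero_of_lt this]; simp
  rw [lah, if_neg (by omega)]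
  exact Nat.div_mul_cancel hdvd

lemma choose_aux (j p : ℕ) :
    (j + 1).choose (p + 1) * (j + 2) = j.choose p * (p + 2) + (j + p + 3) * j.choose (p + 1) := by
  rcases le_or_gt p j with h | h
  · have hR := Nat.choose_succ_right_eq j p
    have hP := Nat.choose_succ_succ j p
    obtain ⟨d, hd⟩ := Nat.exists_eq_add_of_le h
    subst hd
    rw [Nat.add_sub_cancel_left] at hR
    simp only [Nat.succ_eq_add_one] at hP
    zify at hR hP ⊢
    linear_combination ((p:ℤ)+d+2) * hP - hR
  · rw [Nat.choose_eq_zero_of_lt h, Nat.choose_eq_zero_of_lt (by omega),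
      Nat.choose_eq_zero_of_lt (by omega)]
    ring

lemma lah_zero_right (n : ℕ) : lah (n + 1) 0 = 0 := by simp [lah]

lemma lah_one_right (n : ℕ) : lah n 1 = n.factorial := by
  simp [lah]

lemma lah_succ_s11 (j m : ℕ) :
    lah (j + 2) (m + 1) = lah (j + 1) m + (j + m + 2) * lah (j + 1) (m + 1) := by
  cases m with
  | zero =>
      simp only [lah_one_right, lah_zero_right, Nat.zero_add, Nat.add_zero]
      rw [Nat.factorial_succ (j+1)]
  | succ p =>
      apply Nat.eq_of_mul_eq_mul_right (Nat.factorial_pos (p + 2))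
      have h1 := lah_mul_factorial (j + 2) (p + 2) (by omega)
      have h2 := lah_mul_factorial (j + 1) (p + 1) (by omega)
      have h3 := lah_mul_factorial (j + 1) (p + 2) (by omega)
      norm_num at h1 h2 h3
      have hf : (p + 2).factorial = (p + 1).factorial * (p + 2) := by
        rw [Nat.factorial_succ]; ring
      calc lah (j + 2) (p + 1 + 1) * (p + 2).factorial
          = (j + 1).choose (p + 1) * (j + 2).factorial := h1
        _ = ((j + 1).choose (p + 1) * (j + 2)) * (j + 1).factorial := by
            rw [Nat.factorial_succ]; ring
        _ = (j.choose p * (p + 2) + (j + p + 3) * j.choose (p + 1)) * (j + 1).factorial := by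
            rw [choose_aux]
        _ = (lah (j + 1) (p + 1) * (p + 1).factorial) * (p + 2)
              + (j + p + 3) * (lah (j + 1) (p + 2) * (p + 2).factorial) := by
            rw [h2, h3]; ring
        _ = (lah (j + 1) (p + 1) + (j + p + 1 + 2) * lah (j + 1) (p + 1 + 1)) * (p + 2).factorial := by
            rw [hf]; ring

lemma lah_eq_zero_of_lt {n k : ℕ} (hn : 1 ≤ n) (h : n < k) : lah n k = 0 := by
  rw [lah, if_neg (by omega), Nat.choose_eq_zero_of_lt (by omega)]
  simp

lemma sum_Icc_one (n : ℕ) (f : ℕ → ℝ) :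
    ∑ k ∈ Icc 1 n, f k = ∑ k ∈ range n, f (k + 1) := by
  rw [← Finset.Ico_add_one_right_eq_Icc, Finset.sum_Ico_eq_sum_range]
  exact Finset.sum_congr rfl fun i _ => by rw [add_comm]

lemma Q_rec (j : ℕ) (v : ℝ) :
    ∑ ℓ ∈ Icc 1 (j + 2), (lah (j + 2) ℓ : ℝ) * v ^ ℓ
      = v * ∑ ℓ ∈ Icc 1 (j + 1), (lah (j + 1) ℓ : ℝ) * v ^ ℓ
        + ∑ ℓ ∈ Icc 1 (j + 1), (ℓ : ℝ) * (lah (j + 1) ℓ : ℝ) * v ^ ℓ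
        + ((j : ℝ) + 1) * ∑ ℓ ∈ Icc 1 (j + 1), (lah (j + 1) ℓ : ℝ) * v ^ ℓ := by
  rw [sum_Icc_one, sum_Icc_one, sum_Icc_one]
  have h1 : ∀ i ∈ range (j + 2), (lah (j + 2) (i + 1) : ℝ) * v ^ (i + 1)
      = (lah (j + 1) i : ℝ) * v ^ (i + 1)
        + (((j : ℝ) + i + 2) * (lah (j + 1) (i + 1) : ℝ)) * v ^ (i + 1) := by
    intro i _
    rw [lah_succ_s11]
    push_cast
    ring
  rw [Finset.sum_congr rfl h1, Finset.sum_add_distrib]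
  have hS1 : ∑ i ∈ range (j + 2), (lah (j + 1) i : ℝ) * v ^ (i + 1)
      = v * ∑ i ∈ range (j + 1), (lah (j + 1) (i + 1) : ℝ) * v ^ (i + 1) := by
    rw [Finset.sum_range_succ']
    simp only [lah_zero_right, Nat.cast_zero, zero_mul, add_zero]
    rw [Finset.mul_sum]
    exact Finset.sum_congr rfl fun i _ => by ring
  have hS2 : ∑ i ∈ range (j + 2), (((j : ℝ) + i + 2) * (lah (j + 1) (i + 1) : ℝ)) * v ^ (i + 1)
      = ∑ i ∈ range (j + 1), ((i : ℕ) + 1 : ℝ) * (lah (j + 1) (i + 1) : ℝ) * v ^ (i + 1)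
        + ((j : ℝ) + 1) * ∑ i ∈ range (j + 1), (lah (j + 1) (i + 1) : ℝ) * v ^ (i + 1) := by
    rw [Finset.sum_range_succ, lah_eq_zero_of_lt (by omega) (by omega)]
    simp only [Nat.cast_zero, mul_zero, zero_mul, add_zero]
    rw [Finset.mul_sum, ← Finset.sum_add_distrib]
    exact Finset.sum_congr rfl fun i _ => by push_cast; ring
  rw [hS1, hS2]
  have : ∀ i ∈ range (j + 1), ((i + 1 : ℕ) : ℝ) * (lah (j + 1) (i + 1) : ℝ) * v ^ (i + 1)
      = ((i : ℕ) + 1 : ℝ) * (lah (j + 1) (i + 1) : ℝ) * v ^ (i + 1) := by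
    intro i _; push_cast; ring
  rw [Finset.sum_congr rfl this]
  ring

lemma key_s11 (n : ℕ) (hn : 1 ≤ n) (v : ℝ) :
    (-v) * (∑ k ∈ Icc 1 n, (-1 : ℝ) ^ k * (∑ ℓ ∈ Icc 1 k, (lah k ℓ : ℝ) * v ^ ℓ) * (stirling n k : ℝ))
      + ∑ k ∈ Icc 1 n, (-1 : ℝ) ^ k * (∑ ℓ ∈ Icc 1 k, (lah k ℓ : ℝ) * (v ^ ℓ * (-(ℓ : ℝ)))) * (stirling n k : ℝ)
    = ∑ k ∈ Icc 1 (n + 1), (-1 : ℝ) ^ k * (∑ ℓ ∈ Icc 1 k, (lah k ℓ : ℝ) * v ^ ℓ) * (stirling (n + 1) k : ℝ) := by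
  obtain ⟨p, rfl⟩ : ∃ p, n = p + 1 := ⟨n - 1, by omega⟩
  rw [sum_Icc_one, sum_Icc_one, sum_Icc_one]
  -- RHS: unfold stirling recurrence and split
  have hR : ∀ m ∈ range (p + 2),
      (-1 : ℝ) ^ (m + 1) * (∑ ℓ ∈ Icc 1 (m + 1), (lah (m + 1) ℓ : ℝ) * v ^ ℓ) * (stirling (p + 1 + 1) (m + 1) : ℝ)
      = (-1 : ℝ) ^ (m + 1) * (∑ ℓ ∈ Icc 1 (m + 1), (lah (m + 1) ℓ : ℝ) * v ^ ℓ) * (stirling (p + 1) m : ℝ)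
        + (-1 : ℝ) ^ (m + 1) * (∑ ℓ ∈ Icc 1 (m + 1), (lah (m + 1) ℓ : ℝ) * v ^ ℓ)
            * (((m : ℝ) + 1) * (stirling (p + 1) (m + 1) : ℝ)) := by
    intro m _
    show _ * _ * ((stirling (p + 1) m + (m + 1) * stirling (p + 1) (m + 1) : ℕ) : ℝ) = _
    push_cast
    ring
  rw [Finset.sum_congr rfl hR, Finset.sum_add_distrib]
  have h0 : ((stirling (p + 1) 0 : ℕ) : ℝ) = 0 := by norm_num [stirling]
  have hlast : ((stirling (p + 1) (p + 1 + 1) : ℕ) : ℝ) = 0 := by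
    rw [stirling_eq_zero_of_lt (by omega)]; norm_num
  conv_rhs =>
    congr
    · rw [Finset.sum_range_succ']
    · rw [Finset.sum_range_succ]
  rw [h0, hlast]
  simp only [mul_zero, add_zero]
  rw [Finset.mul_sum, ← Finset.sum_add_distrib, ← Finset.sum_add_distrib]
  refine Finset.sum_congr rfl fun m _ => ?_
  have hneg : ∑ ℓ ∈ Icc 1 (m + 1), (lah (m + 1) ℓ : ℝ) * (v ^ ℓ * (-(ℓ : ℝ)))
      = -∑ ℓ ∈ Icc 1 (m + 1), (ℓ : ℝ) * (lah (m + 1) ℓ : ℝ) * v ^ ℓ := by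
    rw [← Finset.sum_neg_distrib]
    exact Finset.sum_congr rfl fun ℓ _ => by ring
  rw [hneg, Q_rec m v]
  push_cast
  ring

lemma hasDerivAt_exp_const_mul (c x : ℝ) :
    HasDerivAt (fun y : ℝ => Real.exp (c * y)) (Real.exp (c * x) * c) x := by
  simpa using ((hasDerivAt_id x).const_mul c).exp

lemma exp_neg_nat_mul (ℓ : ℕ) (x : ℝ) :
    Real.exp (-(ℓ : ℝ) * x) = (Real.exp (-x)) ^ ℓ := by
  rw [← Real.exp_nat_mul]
  congr 1
  ring

theorem iteratedDeriv_exp_exp_neg (n : ℕ) (hn : 1 ≤ n) (x : ℝ) :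
    iteratedDeriv n (fun x : ℝ => Real.exp (Real.exp (-x))) x =
      Real.exp (Real.exp (-x)) *
        ∑ k ∈ Finset.Icc 1 n,
          (-1 : ℝ) ^ k *
            (∑ ℓ ∈ Finset.Icc 1 k, (lah k ℓ : ℝ) * Real.exp (-(ℓ : ℝ) * x)) *
              (stirling n k : ℝ) := by
  induction n, hn using Nat.le_induction generalizing x with
  | base =>
      rw [iteratedDeriv_one]
      have hE : HasDerivAt (fun y : ℝ => Real.exp (Real.exp (-y)))
          (Real.exp (Real.exp (-x)) * (Real.exp (-x) * -1)) x := by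
        have h2 : HasDerivAt (fun y : ℝ => Real.exp (-y)) (Real.exp (-x) * -1) x := by
          simpa using (hasDerivAt_neg x).exp
        simpa using h2.exp
      rw [hE.deriv]
      have h11 : lah 1 1 = 1 := by decide
      have hs11 : stirling 1 1 = 1 := by decide
      simp [h11, hs11]
  | succ n hn ih =>
      have hfun : iteratedDeriv n (fun x : ℝ => Real.exp (Real.exp (-x)))
          = fun y : ℝ => Real.exp (Real.exp (-y)) *
              ∑ k ∈ Finset.Icc 1 n,
                (-1 : ℝ) ^ k *
                  (∑ ℓ ∈ Finset.Icc 1 k, (lah k ℓ : ℝ) * Real.exp (-(ℓ : ℝ) * y)) *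
                    (stirling n k : ℝ) := funext fun y => ih y
      rw [iteratedDeriv_succ, hfun]
      have hE : HasDerivAt (fun y : ℝ => Real.exp (Real.exp (-y)))
          (Real.exp (Real.exp (-x)) * (Real.exp (-x) * -1)) x := by
        have h2 : HasDerivAt (fun y : ℝ => Real.exp (-y)) (Real.exp (-x) * -1) x := by
          simpa using (hasDerivAt_neg x).exp
        simpa using h2.exp
      have hP : HasDerivAt (fun y : ℝ =>
            ∑ k ∈ Finset.Icc 1 n,
              (-1 : ℝ) ^ k *
                (∑ ℓ ∈ Finset.Icc 1 k, (lah k ℓ : ℝ) * Real.exp (-(ℓ : ℝ) * y)) *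
                  (stirling n k : ℝ))
          (∑ k ∈ Finset.Icc 1 n,
              (-1 : ℝ) ^ k *
                (∑ ℓ ∈ Finset.Icc 1 k, (lah k ℓ : ℝ) * (Real.exp (-(ℓ : ℝ) * x) * (-(ℓ : ℝ)))) *
                  (stirling n k : ℝ)) x := by
        apply HasDerivAt.fun_sum
        intro k _
        apply HasDerivAt.mul_const
        apply HasDerivAt.const_mul
        apply HasDerivAt.fun_sum
        intro ℓ _
        exact (hasDerivAt_exp_const_mul (-(ℓ : ℝ)) x).const_mul _
      have hG := hE.mul hP
      erw [hG.deriv]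
      simp only [exp_neg_nat_mul]
      rw [← key_s11 n hn (Real.exp (-x))]
      ring
end

section
/- Faà di Bruno's formula: if f and h are n-times continuously differentiable real functions, then the n-th derivative of the composition f ∘ h at t equals Σ_{k=1}^{n} f^{(k)}(h(t)) · B_{n,k}(h'(t), h''(t), ..., h^{(n-k+1)}(t)), where B_{n,k} denotes the partial Bell polynomial. -/
open Finset

/-- The partial Bell polynomial B_{n,k}(x_1,…,x_{n-k+1}). -/
noncomputable def bellPoly (n k : ℕ) (x : ℕ → ℝ) : ℝ :=
  ∑ ℓ ∈ (Fintype.piFinset (fun _ : Fin (n - k + 1) => Finset.range (n + 1))).filter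
      (fun ℓ => (∑ i, (i.1 + 1) * ℓ i) = n ∧ (∑ i, ℓ i) = k),
    (Nat.factorial n : ℝ) / (∏ i, (Nat.factorial (ℓ i) : ℝ)) *
      ∏ i, (x (i.1 + 1) / (Nat.factorial (i.1 + 1) : ℝ)) ^ ℓ i


@[to_additive]
lemma ext_prod {M : Type*} [CommMonoid M] {N N' : ℕ} (h : N ≤ N') (F : Fin N' → M)
    (hF : ∀ i : Fin N', N ≤ i.1 → F i = 1) :
    ∏ i, F i = ∏ i : Fin N, F (Fin.castLE h i) := by
  have h1 : ∏ i ∈ univ.map (Fin.castLEEmb h), F i = ∏ i : Fin N, F (Fin.castLE h i) := by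
    rw [Finset.prod_map]; simp
  rw [← h1]
  refine (Finset.prod_subset (Finset.subset_univ _) fun i _ hi => hF i ?_).symm
  simp only [Finset.mem_map, Finset.mem_univ, true_and, Fin.castLEEmb_apply] at hi
  by_contra hlt
  exact hi ⟨⟨i.1, by omega⟩, by ext; simp⟩

noncomputable def bp (N n k : ℕ) (x : ℕ → ℝ) : ℝ :=
  ∑ ℓ ∈ (Fintype.piFinset (fun _ : Fin N => Finset.range (n + 1))).filter
      (fun ℓ => (∑ i, (i.1 + 1) * ℓ i) = n ∧ (∑ i, ℓ i) = k),
    (Nat.factorial n : ℝ) / (∏ i, (Nat.factorial (ℓ i) : ℝ)) *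
      ∏ i, (x (i.1 + 1) / (Nat.factorial (i.1 + 1) : ℝ)) ^ ℓ i

lemma bp_support {N n k : ℕ} (ℓ : Fin N → ℕ)
    (h1 : (∑ i, (i.1 + 1) * ℓ i) = n) (h2 : (∑ i, ℓ i) = k)
    (i : Fin N) (hi : n - k + 1 ≤ i.1) : ℓ i = 0 := by
  by_contra hne
  have hℓi : 1 ≤ ℓ i := Nat.one_le_iff_ne_zero.mpr hne
  have hsplit : (∑ j : Fin N, (j.1 + 1) * ℓ j) = (∑ j : Fin N, j.1 * ℓ j) + ∑ j : Fin N, ℓ j := by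
    rw [← Finset.sum_add_distrib]
    exact Finset.sum_congr rfl fun j _ => by ring
  have hle : i.1 * ℓ i ≤ ∑ j : Fin N, j.1 * ℓ j :=
    Finset.single_le_sum (f := fun j : Fin N => j.1 * ℓ j) (fun j _ => Nat.zero_le _)
      (Finset.mem_univ i)
  have : i.1 ≤ i.1 * ℓ i := Nat.le_mul_of_pos_right _ hℓi
  omega

lemma bp_ext {N N' n k : ℕ} (h1 : n - k + 1 ≤ N) (h2 : N ≤ N') (x : ℕ → ℝ) :
    bp N n k x = bp N' n k x := by
  unfold bp
  have key : ∀ ℓ : Fin N → ℕ, ∀ g : ℕ → ℕ → ℝ,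
      (∀ m, g m 0 = 1) →
      (∏ i' : Fin N', g i'.1 (if hlt : i'.1 < N then ℓ ⟨i'.1, hlt⟩ else 0))
        = ∏ i : Fin N, g i.1 (ℓ i) := by
    intro ℓ g hg
    rw [ext_prod h2 (fun i' : Fin N' => g i'.1 (if hlt : i'.1 < N then ℓ ⟨i'.1, hlt⟩ else 0))
      (fun i' hi' => by beta_reduce; rw [dif_neg (by omega)]; exact hg _)]
    refine Finset.prod_congr rfl fun i _ => ?_
    simp only [Fin.coe_castLE]
    rw [dif_pos i.2]
  have keyN : ∀ ℓ : Fin N → ℕ, ∀ g : ℕ → ℕ → ℕ,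
      (∀ m, g m 0 = 0) →
      (∑ i' : Fin N', g i'.1 (if hlt : i'.1 < N then ℓ ⟨i'.1, hlt⟩ else 0))
        = ∑ i : Fin N, g i.1 (ℓ i) := by
    intro ℓ g hg
    rw [ext_sum h2 (fun i' : Fin N' => g i'.1 (if hlt : i'.1 < N then ℓ ⟨i'.1, hlt⟩ else 0))
      (fun i' hi' => by beta_reduce; rw [dif_neg (by omega)]; exact hg _)]
    refine Finset.sum_congr rfl fun i _ => ?_
    simp only [Fin.coe_castLE]
    rw [dif_pos i.2]
  have keyN' : ∀ ℓ' : Fin N' → ℕ, (∀ i' : Fin N', N ≤ i'.1 → ℓ' i' = 0) → ∀ g : ℕ → ℕ → ℕ,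
      (∀ m, g m 0 = 0) →
      (∑ i' : Fin N', g i'.1 (ℓ' i')) = ∑ i : Fin N, g i.1 (ℓ' (Fin.castLE h2 i)) := by
    intro ℓ' hz g hg
    rw [ext_sum h2 (fun i' : Fin N' => g i'.1 (ℓ' i'))
      (fun i' hi' => by beta_reduce; rw [hz i' hi']; exact hg _)]
    refine Finset.sum_congr rfl fun i _ => ?_
    simp only [Fin.coe_castLE]
  refine Finset.sum_nbij'
    (fun ℓ (i' : Fin N') => if hlt : i'.1 < N then ℓ ⟨i'.1, hlt⟩ else 0)
    (fun ℓ' (i : Fin N) => ℓ' (Fin.castLE h2 i)) ?_ ?_ ?_ ?_ ?_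
  · intro ℓ hℓ
    simp only [Finset.mem_filter, Fintype.mem_piFinset, Finset.mem_range] at hℓ ⊢
    obtain ⟨hbox, hc1, hc2⟩ := hℓ
    refine ⟨fun i' => ?_, ?_, ?_⟩
    · by_cases hlt : i'.1 < N
      · rw [dif_pos hlt]; exact hbox _
      · rw [dif_neg hlt]; omega
    · rw [keyN ℓ (fun m v => (m + 1) * v) (fun m => mul_zero _)]; exact hc1
    · rw [keyN ℓ (fun m v => v) (fun m => rfl)]; exact hc2
  · intro ℓ' hℓ'
    simp only [Finset.mem_filter, Fintype.mem_piFinset, Finset.mem_range] at hℓ' ⊢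
    obtain ⟨hbox, hc1, hc2⟩ := hℓ'
    have hz : ∀ i' : Fin N', N ≤ i'.1 → ℓ' i' = 0 :=
      fun i' hi' => bp_support ℓ' hc1 hc2 i' (by omega)
    refine ⟨fun i => hbox _, ?_, ?_⟩
    · rw [← hc1, keyN' ℓ' hz (fun m v => (m + 1) * v) (fun m => mul_zero _)]
    · rw [← hc2, keyN' ℓ' hz (fun m v => v) (fun m => rfl)]
  · intro ℓ hℓ
    funext i
    simp only [Fin.coe_castLE]
    rw [dif_pos i.2]
  · intro ℓ' hℓ'
    simp only [Finset.mem_filter, Fintype.mem_piFinset, Finset.mem_range] at hℓ'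
    obtain ⟨hbox, hc1, hc2⟩ := hℓ'
    have hz : ∀ i' : Fin N', N ≤ i'.1 → ℓ' i' = 0 :=
      fun i' hi' => bp_support ℓ' hc1 hc2 i' (by omega)
    funext i'
    by_cases hlt : i'.1 < N
    · simp only [dif_pos hlt]; rfl
    · simp only [dif_neg hlt]; exact (hz i' (by omega)).symm
  · intro ℓ hℓ
    simp only
    rw [key ℓ (fun m v => ((Nat.factorial v : ℕ) : ℝ)) (fun m => by simp),
      key ℓ (fun m v => (x (m + 1) / (Nat.factorial (m + 1) : ℝ)) ^ v) (fun m => pow_zero _)]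


lemma bp_rec_aux {n k : ℕ} (i : Fin (n + 1)) (x : ℕ → ℝ) :
    ∑ ℓ ∈ (Fintype.piFinset (fun _ : Fin (n + 1) => Finset.range (n + 1 + 1))).filter
        (fun ℓ => (∑ a, (a.1 + 1) * ℓ a) = n + 1 ∧ (∑ a, ℓ a) = k + 1),
      (((i.1 + 1) * ℓ i : ℕ) : ℝ) / ((n : ℝ) + 1) *
        ((Nat.factorial (n + 1) : ℝ) / (∏ a, (Nat.factorial (ℓ a) : ℝ)) *
          ∏ a, (x (a.1 + 1) / (Nat.factorial (a.1 + 1) : ℝ)) ^ ℓ a)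
      = (n.choose i.1 : ℝ) * x (i.1 + 1) * bp (n + 1) (n - i.1) k x := by
  have hile : i.1 ≤ n := Nat.lt_succ_iff.mp i.2
  have hind : (∑ a : Fin (n + 1), (if a = i then 1 else 0)) = 1 := by
    rw [Finset.sum_ite_eq' Finset.univ i (fun _ => 1)]; simp
  have hindw : (∑ a : Fin (n + 1), (a.1 + 1) * (if a = i then 1 else 0)) = i.1 + 1 := by
    rw [Finset.sum_eq_single_of_mem i (Finset.mem_univ i)
      (fun a _ hai => by rw [if_neg hai, mul_zero])]
    rw [if_pos rfl, mul_one]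
  rw [bp, Finset.mul_sum]
  rw [← Finset.sum_filter_of_ne (p := fun ℓ : Fin (n + 1) → ℕ => ℓ i ≠ 0)
    (fun ℓ _ hne hzero => by rw [hzero, mul_zero] at hne; simp at hne)]
  refine Finset.sum_nbij'
    (fun ℓ (a : Fin (n + 1)) => ℓ a - (if a = i then 1 else 0))
    (fun m (a : Fin (n + 1)) => m a + (if a = i then 1 else 0)) ?_ ?_ ?_ ?_ ?_
  -- forward membership
  · intro ℓ hℓ
    simp only [Finset.mem_filter, Fintype.mem_piFinset, Finset.mem_range] at hℓ ⊢
    obtain ⟨⟨hbox, hc1, hc2⟩, hne⟩ := hℓ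
    have hcomp : ∀ a : Fin (n + 1),
        (ℓ a - (if a = i then 1 else 0)) + (if a = i then 1 else 0) = ℓ a := by
      intro a
      by_cases hai : a = i
      · subst hai; simp only [if_pos rfl, if_true]; have := Nat.one_le_iff_ne_zero.mpr hne; omega
      · simp [hai]
    have e1 : (∑ a : Fin (n + 1), ((a.1 + 1) * (ℓ a - (if a = i then 1 else 0))
          + (a.1 + 1) * (if a = i then 1 else 0)))
        = ∑ a : Fin (n + 1), (a.1 + 1) * ℓ a :=
      Finset.sum_congr rfl fun a _ => by rw [← Nat.mul_add, hcomp a]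
    have e2 := Finset.sum_add_distrib (s := (Finset.univ : Finset (Fin (n + 1))))
      (f := fun a => (a.1 + 1) * (ℓ a - (if a = i then 1 else 0)))
      (g := fun a => (a.1 + 1) * (if a = i then 1 else 0))
    have e3 : (∑ a : Fin (n + 1), ((ℓ a - (if a = i then 1 else 0)) + (if a = i then 1 else 0)))
        = ∑ a : Fin (n + 1), ℓ a := Finset.sum_congr rfl fun a _ => by rw [hcomp a]
    have e4 := Finset.sum_add_distrib (s := (Finset.univ : Finset (Fin (n + 1))))
      (f := fun a => ℓ a - (if a = i then 1 else 0)) (g := fun a => (if a = i then 1 else 0))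
    refine ⟨fun a => ?_, by omega, by omega⟩
    · have hle : ℓ a - (if a = i then 1 else 0) ≤ ∑ b, (ℓ b - (if b = i then 1 else 0)) :=
        Finset.single_le_sum (f := fun b : Fin (n+1) => ℓ b - (if b = i then 1 else 0))
          (fun b _ => Nat.zero_le _) (Finset.mem_univ a)
      have hkle : (∑ b : Fin (n + 1), (ℓ b - (if b = i then 1 else 0)))
          ≤ ∑ b : Fin (n + 1), (b.1 + 1) * (ℓ b - (if b = i then 1 else 0)) :=
        Finset.sum_le_sum fun b _ => Nat.le_mul_of_pos_left _ (by omega)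
      omega
  -- backward membership
  · intro m hm
    simp only [Finset.mem_filter, Fintype.mem_piFinset, Finset.mem_range] at hm ⊢
    obtain ⟨hbox, hc1, hc2⟩ := hm
    have hkle : k ≤ n - i.1 := by
      calc k = ∑ a, m a := hc2.symm
      _ ≤ ∑ a, (a.1 + 1) * m a := Finset.sum_le_sum fun a _ => Nat.le_mul_of_pos_left _ (by omega)
      _ = n - i.1 := hc1
    have e1 : (∑ a : Fin (n + 1), (a.1 + 1) * (m a + (if a = i then 1 else 0)))
        = (∑ a : Fin (n + 1), (a.1 + 1) * m a)
          + ∑ a : Fin (n + 1), (a.1 + 1) * (if a = i then 1 else 0) := by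
      rw [← Finset.sum_add_distrib]
      exact Finset.sum_congr rfl fun a _ => Nat.mul_add _ _ _
    have e2 : (∑ a : Fin (n + 1), (m a + (if a = i then 1 else 0)))
        = (∑ a : Fin (n + 1), m a) + ∑ a : Fin (n + 1), (if a = i then 1 else 0) :=
      Finset.sum_add_distrib
    refine ⟨⟨fun a => ?_, by omega, by omega⟩, by simp⟩
    · have : m a ≤ ∑ b, m b := Finset.single_le_sum (f := m) (fun b _ => Nat.zero_le _)
        (Finset.mem_univ a)
      split <;> omega
  -- left inverse
  · intro ℓ hℓ
    simp only [Finset.mem_filter, Fintype.mem_piFinset, Finset.mem_range] at hℓ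
    obtain ⟨⟨hbox, hc1, hc2⟩, hne⟩ := hℓ
    funext a
    by_cases hai : a = i
    · subst hai; simp only [if_pos rfl, if_true]; have := Nat.one_le_iff_ne_zero.mpr hne; omega
    · simp [hai]
  -- right inverse
  · intro m hm
    funext a
    by_cases hai : a = i
    · subst hai; simp only [if_pos rfl, if_true]; omega
    · simp [hai]
  -- term equality
  · intro ℓ hℓ
    simp only [Finset.mem_filter, Fintype.mem_piFinset, Finset.mem_range] at hℓ
    obtain ⟨⟨hbox, hc1, hc2⟩, hne⟩ := hℓ
    simp only
    have hL : ℓ i = (ℓ i - 1) + 1 := by have := Nat.one_le_iff_ne_zero.mpr hne; omega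
    have hfac : (∏ a, (Nat.factorial (ℓ a) : ℝ))
        = (ℓ i : ℝ) * ∏ a, (Nat.factorial (ℓ a - (if a = i then 1 else 0)) : ℝ) := by
      have herase : (∏ a ∈ Finset.univ.erase i,
            (Nat.factorial (ℓ a - (if a = i then 1 else 0)) : ℝ))
          = ∏ a ∈ Finset.univ.erase i, (Nat.factorial (ℓ a) : ℝ) :=
        Finset.prod_congr rfl fun a ha => by
          rw [if_neg (Finset.ne_of_mem_erase ha), Nat.sub_zero]
      rw [← Finset.mul_prod_erase Finset.univ _ (Finset.mem_univ i),
        ← Finset.mul_prod_erase Finset.univ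
          (fun a => (Nat.factorial (ℓ a - (if a = i then 1 else 0)) : ℝ)) (Finset.mem_univ i)]
      simp only [herase, if_pos rfl, if_true]
      rw [← mul_assoc]
      congr 1
      rw [← Nat.cast_mul]
      congr 1
      conv_lhs => rw [hL]
      rw [Nat.factorial_succ, ← hL]
    have hpow : (∏ a, (x (a.1 + 1) / (Nat.factorial (a.1 + 1) : ℝ)) ^ ℓ a)
        = (x (i.1 + 1) / (Nat.factorial (i.1 + 1) : ℝ)) *
          ∏ a, (x (a.1 + 1) / (Nat.factorial (a.1 + 1) : ℝ)) ^ (ℓ a - (if a = i then 1 else 0)) := by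
      have herase : (∏ a ∈ Finset.univ.erase i,
            (x (a.1 + 1) / (Nat.factorial (a.1 + 1) : ℝ)) ^ (ℓ a - (if a = i then 1 else 0)))
          = ∏ a ∈ Finset.univ.erase i, (x (a.1 + 1) / (Nat.factorial (a.1 + 1) : ℝ)) ^ ℓ a :=
        Finset.prod_congr rfl fun a ha => by
          rw [if_neg (Finset.ne_of_mem_erase ha), Nat.sub_zero]
      rw [← Finset.mul_prod_erase Finset.univ _ (Finset.mem_univ i),
        ← Finset.mul_prod_erase Finset.univ
          (fun a => (x (a.1 + 1) / (Nat.factorial (a.1 + 1) : ℝ)) ^ (ℓ a - (if a = i then 1 else 0)))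
          (Finset.mem_univ i)]
      simp only [herase, if_pos rfl, if_true]
      rw [← mul_assoc]
      congr 1
      conv_lhs => rw [hL]
      rw [pow_succ]
      ring
    rw [hfac, hpow]
    set A := ∏ a, (Nat.factorial (ℓ a - (if a = i then 1 else 0)) : ℝ) with hA
    set B := ∏ a, (x (a.1 + 1) / (Nat.factorial (a.1 + 1) : ℝ)) ^ (ℓ a - (if a = i then 1 else 0))
      with hB
    have hAne : A ≠ 0 := by
      rw [hA]
      exact Finset.prod_ne_zero_iff.mpr fun a _ =>
        Nat.cast_ne_zero.mpr (Nat.factorial_ne_zero _)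
    have hcne : (ℓ i : ℝ) ≠ 0 := Nat.cast_ne_zero.mpr hne
    have h3 : ((n.choose i.1 : ℕ) : ℝ) * (Nat.factorial i.1 : ℝ) * (Nat.factorial (n - i.1) : ℝ)
        = (Nat.factorial n : ℝ) := by
      rw [← Nat.cast_mul, ← Nat.cast_mul]
      exact_mod_cast congrArg (Nat.cast (R := ℝ)) (Nat.choose_mul_factorial_mul_factorial hile)
    have h1 : (Nat.factorial (n + 1) : ℝ) = ((n : ℝ) + 1) * (Nat.factorial n : ℝ) := by
      rw [Nat.factorial_succ]; push_cast; ring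
    have h2 : (Nat.factorial (i.1 + 1) : ℝ) = ((i.1 : ℝ) + 1) * (Nat.factorial i.1 : ℝ) := by
      rw [Nat.factorial_succ]; push_cast; ring
    have hn1 : ((n : ℝ) + 1) ≠ 0 := by positivity
    have hi1 : ((i.1 : ℝ) + 1) ≠ 0 := by positivity
    have hfi : (Nat.factorial i.1 : ℝ) ≠ 0 := Nat.cast_ne_zero.mpr (Nat.factorial_ne_zero _)
    push_cast
    rw [h1, h2]
    rw [← h3]
    field_simp

lemma bp_rec {n k : ℕ} (x : ℕ → ℝ) :
    bp (n + 1) (n + 1) (k + 1) x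
      = ∑ i : Fin (n + 1), (n.choose i.1 : ℝ) * x (i.1 + 1) * bp (n + 1) (n - i.1) k x := by
  calc bp (n + 1) (n + 1) (k + 1) x
      = ∑ ℓ ∈ (Fintype.piFinset (fun _ : Fin (n + 1) => Finset.range (n + 1 + 1))).filter
            (fun ℓ => (∑ a, (a.1 + 1) * ℓ a) = n + 1 ∧ (∑ a, ℓ a) = k + 1),
          ∑ i : Fin (n + 1),
            (((i.1 + 1) * ℓ i : ℕ) : ℝ) / ((n : ℝ) + 1) *
              ((Nat.factorial (n + 1) : ℝ) / (∏ a, (Nat.factorial (ℓ a) : ℝ)) *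
                ∏ a, (x (a.1 + 1) / (Nat.factorial (a.1 + 1) : ℝ)) ^ ℓ a) := by
        rw [bp]
        refine Finset.sum_congr rfl fun ℓ hℓ => ?_
        simp only [Finset.mem_filter, Fintype.mem_piFinset, Finset.mem_range] at hℓ
        obtain ⟨hbox, hc1, hc2⟩ := hℓ
        rw [← Finset.sum_mul, ← Finset.sum_div, ← Nat.cast_sum, hc1]
        rw [show ((n + 1 : ℕ) : ℝ) = (n : ℝ) + 1 by push_cast; ring,
          div_self (by positivity), one_mul]
    _ = ∑ i : Fin (n + 1),
          ∑ ℓ ∈ (Fintype.piFinset (fun _ : Fin (n + 1) => Finset.range (n + 1 + 1))).filter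
            (fun ℓ => (∑ a, (a.1 + 1) * ℓ a) = n + 1 ∧ (∑ a, ℓ a) = k + 1),
            (((i.1 + 1) * ℓ i : ℕ) : ℝ) / ((n : ℝ) + 1) *
              ((Nat.factorial (n + 1) : ℝ) / (∏ a, (Nat.factorial (ℓ a) : ℝ)) *
                ∏ a, (x (a.1 + 1) / (Nat.factorial (a.1 + 1) : ℝ)) ^ ℓ a) := Finset.sum_comm
    _ = _ := Finset.sum_congr rfl fun i _ => bp_rec_aux i x

lemma bp_zero {N n k : ℕ} (h : n < k) (x : ℕ → ℝ) : bp N n k x = 0 := by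
  rw [bp]
  refine Finset.sum_eq_zero fun ℓ hℓ => ?_
  exfalso
  simp only [Finset.mem_filter, Fintype.mem_piFinset, Finset.mem_range] at hℓ
  obtain ⟨hbox, hc1, hc2⟩ := hℓ
  have : (∑ a, ℓ a) ≤ ∑ a : Fin N, (a.1 + 1) * ℓ a :=
    Finset.sum_le_sum fun a _ => Nat.le_mul_of_pos_left _ (by omega)
  omega

lemma bellPoly_eq_bp (n k : ℕ) (x : ℕ → ℝ) : bellPoly n k x = bp (n - k + 1) n k x := rfl

lemma bellPoly_rec {n k : ℕ} (hk : 1 ≤ k) (hkn : k ≤ n) (x : ℕ → ℝ) :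
    bellPoly (n + 1) (k + 1) x
      = ∑ m ∈ Finset.Icc k n, (n.choose m : ℝ) * x (n + 1 - m) * bellPoly m k x := by
  have h0 : bellPoly (n + 1) (k + 1) x = bp (n + 1) (n + 1) (k + 1) x := by
    rw [bellPoly_eq_bp]
    exact bp_ext (by omega) (by omega) x
  rw [h0, bp_rec]
  rw [Fin.sum_univ_eq_sum_range
    (fun j => (n.choose j : ℝ) * x (j + 1) * bp (n + 1) (n - j) k x) (n + 1)]
  rw [← Finset.sum_range_reflect]
  have hstep : ∀ m ∈ Finset.range (n + 1),
      (n.choose (n + 1 - 1 - m) : ℝ) * x ((n + 1 - 1 - m) + 1)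
          * bp (n + 1) (n - (n + 1 - 1 - m)) k x
        = (n.choose m : ℝ) * x (n + 1 - m) * bp (n + 1) m k x := by
    intro m hm
    simp only [Finset.mem_range] at hm
    have h1 : n + 1 - 1 - m = n - m := by omega
    have h2 : n - (n - m) = m := by omega
    have h3 : n - m + 1 = n + 1 - m := by omega
    rw [h1, h2, h3, Nat.choose_symm (by omega : m ≤ n)]
  rw [Finset.sum_congr rfl hstep]
  have hsub : Finset.Icc k n ⊆ Finset.range (n + 1) := fun m hm =>
    Finset.mem_range.mpr (by have := (Finset.mem_Icc.mp hm).2; omega)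
  refine Eq.trans (Finset.sum_subset hsub ?_).symm (Finset.sum_congr rfl ?_)
  · intro m hm hnot
    have h1 := Finset.mem_range.mp hm
    have h2 : m < k := by
      by_contra hc
      exact hnot (Finset.mem_Icc.mpr ⟨by omega, by omega⟩)
    rw [bp_zero h2, mul_zero]
  · intro m hm
    obtain ⟨h1, h2⟩ := Finset.mem_Icc.mp hm
    rw [bellPoly_eq_bp, bp_ext (N := m - k + 1) (N' := n + 1) (le_refl _) (by omega) x]


lemma my_iteratedDeriv_mul (n : ℕ) (f g : ℝ → ℝ) (hf : ContDiff ℝ n f) (hg : ContDiff ℝ n g) :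
    iteratedDeriv n (fun s => f s * g s)
      = fun t => ∑ i ∈ Finset.range (n + 1),
          (n.choose i : ℝ) * iteratedDeriv i f t * iteratedDeriv (n - i) g t := by
  induction n with
  | zero => funext t; simp [iteratedDeriv_zero]
  | succ n ih =>
    have hfn : ContDiff ℝ n f := hf.of_le (by exact_mod_cast Nat.le_succ n)
    have hgn : ContDiff ℝ n g := hg.of_le (by exact_mod_cast Nat.le_succ n)
    funext t
    rw [iteratedDeriv_succ, ih hfn hgn]
    have hdf : ∀ i, i ≤ n → Differentiable ℝ (iteratedDeriv i f) :=
      fun i hi => hf.differentiable_iteratedDeriv i (by exact_mod_cast Nat.lt_succ_of_le hi)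
    have hdg : ∀ i, i ≤ n → Differentiable ℝ (iteratedDeriv i g) :=
      fun i hi => hg.differentiable_iteratedDeriv i (by exact_mod_cast Nat.lt_succ_of_le hi)
    have hterm : ∀ i ∈ Finset.range (n + 1), HasDerivAt
        (fun t => (n.choose i : ℝ) * iteratedDeriv i f t * iteratedDeriv (n - i) g t)
        ((n.choose i : ℝ) * (iteratedDeriv (i + 1) f t * iteratedDeriv (n - i) g t
          + iteratedDeriv i f t * iteratedDeriv (n - i + 1) g t)) t := by
      intro i hi
      have hi' := Finset.mem_range.mp hi
      have hu : HasDerivAt (iteratedDeriv i f) (iteratedDeriv (i + 1) f t) t := by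
        rw [iteratedDeriv_succ]
        exact ((hdf i (by omega)) t).hasDerivAt
      have hv : HasDerivAt (iteratedDeriv (n - i) g) (iteratedDeriv (n - i + 1) g t) t := by
        rw [iteratedDeriv_succ]
        exact ((hdg (n - i) (by omega)) t).hasDerivAt
      have := (hu.mul hv).const_mul (n.choose i : ℝ)
      simpa [mul_assoc] using this
    have hsum : HasDerivAt
        (fun t => ∑ i ∈ Finset.range (n + 1),
          (n.choose i : ℝ) * iteratedDeriv i f t * iteratedDeriv (n - i) g t)
        (∑ i ∈ Finset.range (n + 1),
          (n.choose i : ℝ) * (iteratedDeriv (i + 1) f t * iteratedDeriv (n - i) g t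
            + iteratedDeriv i f t * iteratedDeriv (n - i + 1) g t)) t :=
      HasDerivAt.fun_sum hterm
    rw [hsum.deriv]
    -- now the combinatorial rearrangement
    set A : ℕ → ℝ := fun i => iteratedDeriv i f t with hA
    set B : ℕ → ℝ := fun j => iteratedDeriv j g t with hB
    have hsplit : ∀ i ∈ Finset.range (n + 1),
        (n.choose i : ℝ) * (A (i + 1) * B (n - i) + A i * B (n - i + 1))
          = (n.choose i : ℝ) * A (i + 1) * B (n - i)
            + (n.choose i : ℝ) * A i * B (n + 1 - i) := by
      intro i hi
      have hi' := Finset.mem_range.mp hi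
      have : n - i + 1 = n + 1 - i := by omega
      rw [this]; ring
    rw [Finset.sum_congr rfl hsplit, Finset.sum_add_distrib]
    set p : ℕ → ℝ := fun j => (n.choose j : ℝ) * A j * B (n + 1 - j) with hp
    have e1 := Finset.sum_range_succ' p (n + 1)
    have e2 := Finset.sum_range_succ p (n + 1)
    have e3 : p (n + 1) = 0 := by
      simp only [hp, Nat.choose_succ_self, Nat.cast_zero, zero_mul]
    have goalsplit := Finset.sum_range_succ'
      (fun j => ((n + 1).choose j : ℝ) * A j * B (n + 1 - j)) (n + 1)
    rw [goalsplit]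
    have hps : ∀ i ∈ Finset.range (n + 1),
        (((n + 1).choose (i + 1) : ℝ)) * A (i + 1) * B (n + 1 - (i + 1))
          = (n.choose i : ℝ) * A (i + 1) * B (n - i) + p (i + 1) := by
      intro i hi
      have h1 : (n + 1).choose (i + 1) = n.choose i + n.choose (i + 1) :=
        Nat.choose_succ_succ' ..
      have h2 : n + 1 - (i + 1) = n - i := by omega
      rw [h1, h2, hp]
      push_cast
      ring
    rw [Finset.sum_congr rfl hps, Finset.sum_add_distrib]
    have hp0 : (((n + 1).choose 0 : ℝ)) * A 0 * B (n + 1 - 0) = p 0 := by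
      simp [hp]
    rw [hp0]
    have : (∑ i ∈ Finset.range (n + 1), p (i + 1)) + p 0 = ∑ j ∈ Finset.range (n + 1), p j := by
      rw [← e1, e2, e3, add_zero]
    linarith [this]


lemma bp_one {m : ℕ} (hm : 1 ≤ m) (x : ℕ → ℝ) : bp m m 1 x = x m := by
  have hm0 : m - 1 < m := by omega
  set j0 : Fin m := ⟨m - 1, hm0⟩ with hj0
  have hset : (Fintype.piFinset (fun _ : Fin m => Finset.range (m + 1))).filter
      (fun ℓ => (∑ i, (i.1 + 1) * ℓ i) = m ∧ (∑ i, ℓ i) = 1)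
      = {fun i => if i = j0 then 1 else 0} := by
    ext ℓ
    simp only [Finset.mem_filter, Fintype.mem_piFinset, Finset.mem_range, Finset.mem_singleton]
    constructor
    · rintro ⟨hbox, hc1, hc2⟩
      obtain ⟨j, hj⟩ : ∃ j, ℓ j ≠ 0 := by
        by_contra hno
        push_neg at hno
        rw [Finset.sum_eq_zero (fun i _ => hno i)] at hc2
        omega
      have hj1 : ℓ j = 1 := by
        have := Finset.single_le_sum (f := ℓ) (fun i _ => Nat.zero_le _) (Finset.mem_univ j)
        omega
      have hrest : ∀ i, i ≠ j → ℓ i = 0 := by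
        intro i hij
        have hsplit := Finset.add_sum_erase Finset.univ ℓ (Finset.mem_univ j)
        have hle := Finset.single_le_sum (f := ℓ) (fun i _ => Nat.zero_le _)
          (Finset.mem_erase.mpr ⟨hij, Finset.mem_univ i⟩)
        omega
      have hsum1 : (∑ i, (i.1 + 1) * ℓ i) = (j.1 + 1) * ℓ j :=
        Finset.sum_eq_single_of_mem j (Finset.mem_univ j)
          (fun i _ hij => by rw [hrest i hij, mul_zero])
      have hjm : j = j0 := by
        rw [hsum1, hj1, mul_one] at hc1
        exact Fin.ext (show j.1 = m - 1 by omega)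
      funext i
      by_cases hij : i = j0
      · rw [if_pos hij, hij, ← hjm, hj1]
      · rw [if_neg hij]; exact hrest i (by rw [hjm]; exact hij)
    · rintro rfl
      refine ⟨fun i => by beta_reduce; split <;> omega, ?_, ?_⟩
      · rw [Finset.sum_eq_single_of_mem j0 (Finset.mem_univ j0)
          (fun i _ hij => by beta_reduce; rw [if_neg hij, mul_zero])]
        beta_reduce
        rw [if_pos rfl, mul_one]
        show m - 1 + 1 = m
        omega
      · rw [Finset.sum_eq_single_of_mem j0 (Finset.mem_univ j0)
          (fun i _ hij => by beta_reduce; rw [if_neg hij])]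
        beta_reduce
        rw [if_pos rfl]
  rw [bp, hset, Finset.sum_singleton]
  have hfact : (∏ i : Fin m, ((Nat.factorial (if i = j0 then 1 else 0)) : ℝ)) = 1 := by
    apply Finset.prod_eq_one
    intro i _
    split <;> simp [Nat.factorial]
  have hpow : (∏ i : Fin m, (x (i.1 + 1) / (Nat.factorial (i.1 + 1) : ℝ))
      ^ (if i = j0 then 1 else 0)) = x m / (Nat.factorial m : ℝ) := by
    rw [Finset.prod_eq_single_of_mem j0 (Finset.mem_univ j0)
      (fun i _ hij => by rw [if_neg hij, pow_zero])]
    rw [if_pos rfl, pow_one]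
    have hv : j0.1 + 1 = m := by show m - 1 + 1 = m; omega
    rw [hv]
  rw [hfact, hpow]
  have : (Nat.factorial m : ℝ) ≠ 0 := Nat.cast_ne_zero.mpr (Nat.factorial_ne_zero m)
  field_simp

lemma bellPoly_one {m : ℕ} (hm : 1 ≤ m) (x : ℕ → ℝ) : bellPoly m 1 x = x m := by
  rw [bellPoly_eq_bp]
  have h : m - 1 + 1 = m := by omega
  rw [h]
  exact bp_one hm x

theorem faa_aux (n : ℕ) : ∀ (hn : 1 ≤ n) (f h : ℝ → ℝ)
    (hf : ContDiff ℝ n f) (hh : ContDiff ℝ n h) (t : ℝ),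
    iteratedDeriv n (f ∘ h) t =
      ∑ k ∈ Finset.Icc 1 n,
        iteratedDeriv k f (h t) * bellPoly n k (fun i => iteratedDeriv i h t) := by
  induction n using Nat.strong_induction_on with
  | _ n IH =>
  intro hn f h hf hh t
  match n, hn with
  | 1, _ =>
    rw [Finset.Icc_self, Finset.sum_singleton, iteratedDeriv_one, iteratedDeriv_one,
      bellPoly_one (le_refl 1), iteratedDeriv_one]
    exact deriv_comp t ((hf.differentiable (by simp)) _)
      ((hh.differentiable (by simp)) _)
  | (n + 2), _ =>
    set m := n + 1 with hm
    have hm1 : 1 ≤ m := by omega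
    -- so the order is m + 1 with m ≥ 1
    have hfc : ContDiff ℝ ((m : WithTop ℕ∞) + 1) f := by exact_mod_cast hf
    have hhc : ContDiff ℝ ((m : WithTop ℕ∞) + 1) h := by exact_mod_cast hh
    have hf' : ContDiff ℝ m (deriv f) := (contDiff_succ_iff_deriv.mp hfc).2.2
    have hh' : ContDiff ℝ m (deriv h) := (contDiff_succ_iff_deriv.mp hhc).2.2
    have hfm : ContDiff ℝ m f := hfc.of_succ
    have hhm : ContDiff ℝ m h := hhc.of_succ
    have hF : ContDiff ℝ m (deriv f ∘ h) := hf'.comp hhm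
    have hcomp : deriv (f ∘ h) = fun s => (deriv f ∘ h) s * deriv h s := by
      funext s
      exact deriv_comp s ((hfc.differentiable (by simp)) _)
        ((hhc.differentiable (by simp)) _)
    have key : iteratedDeriv (m + 1) (f ∘ h) t =
        ∑ i ∈ Finset.range (m + 1), ((m.choose i : ℝ)
          * iteratedDeriv i (deriv f ∘ h) t) * iteratedDeriv (m - i + 1) h t := by
      rw [iteratedDeriv_succ', hcomp]
      rw [my_iteratedDeriv_mul m (deriv f ∘ h) (deriv h) hF hh']
      refine Finset.sum_congr rfl fun i _ => ?_
      rw [← iteratedDeriv_succ', mul_assoc]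
    rw [key]
    -- pull out the i = 0 term
    rw [Finset.sum_range_succ']
    have hT0 : ((m.choose 0 : ℝ) * iteratedDeriv 0 (deriv f ∘ h) t) * iteratedDeriv (m - 0 + 1) h t
        = deriv f (h t) * iteratedDeriv (m + 1) h t := by
      simp [iteratedDeriv_zero]
    rw [hT0]
    -- rewrite the shifted terms using the induction hypothesis
    have hstep : ∀ i ∈ Finset.range m,
        ((m.choose (i + 1) : ℝ) * iteratedDeriv (i + 1) (deriv f ∘ h) t)
            * iteratedDeriv (m - (i + 1) + 1) h t
          = ∑ k ∈ Finset.Icc 1 (i + 1),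
              iteratedDeriv (k + 1) f (h t)
                * ((m.choose (i + 1) : ℝ) * iteratedDeriv (m - (i + 1) + 1) h t
                  * bellPoly (i + 1) k (fun j => iteratedDeriv j h t)) := by
      intro i hi
      have him : i + 1 ≤ m := Finset.mem_range.mp hi
      have hih := IH (i + 1) (by omega) (by omega) (deriv f) h
        (hf'.of_le (by exact_mod_cast him)) (hhm.of_le (by exact_mod_cast him)) t
      rw [hih, Finset.mul_sum, Finset.sum_mul]
      refine Finset.sum_congr rfl fun k hk => ?_
      rw [← iteratedDeriv_succ']
      ring
    rw [Finset.sum_congr rfl hstep]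
    -- reindex over j = i + 1 ∈ Icc 1 m, i.e. Ico 1 (m + 1)
    have hreindex : (∑ i ∈ Finset.range m, ∑ k ∈ Finset.Icc 1 (i + 1),
          iteratedDeriv (k + 1) f (h t)
            * ((m.choose (i + 1) : ℝ) * iteratedDeriv (m - (i + 1) + 1) h t
              * bellPoly (i + 1) k (fun j => iteratedDeriv j h t)))
        = ∑ j ∈ Finset.Ico 1 (m + 1), ∑ k ∈ Finset.Ico 1 (j + 1),
            iteratedDeriv (k + 1) f (h t)
              * ((m.choose j : ℝ) * iteratedDeriv (m + 1 - j) h t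
                * bellPoly j k (fun j => iteratedDeriv j h t)) := by
      rw [Finset.sum_Ico_eq_sum_range]
      simp only [Nat.add_sub_cancel]
      refine Finset.sum_congr rfl fun i hi => ?_
      have him : i < m := Finset.mem_range.mp hi
      have h1 : 1 + i = i + 1 := by omega
      have h2 : m - (i + 1) + 1 = m + 1 - (i + 1) := by omega
      rw [h1, h2, Finset.Ico_add_one_right_eq_Icc]
    rw [hreindex, ← Finset.sum_Ico_Ico_comm 1 (m + 1)
      (fun k j => iteratedDeriv (k + 1) f (h t)
        * ((m.choose j : ℝ) * iteratedDeriv (m + 1 - j) h t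
          * bellPoly j k (fun j => iteratedDeriv j h t)))]
    -- inner sum via the Bell polynomial recurrence
    have hinner : ∀ k ∈ Finset.Ico 1 (m + 1),
        (∑ j ∈ Finset.Ico k (m + 1),
          iteratedDeriv (k + 1) f (h t)
            * ((m.choose j : ℝ) * iteratedDeriv (m + 1 - j) h t
              * bellPoly j k (fun j => iteratedDeriv j h t)))
          = iteratedDeriv (k + 1) f (h t)
              * bellPoly (m + 1) (k + 1) (fun j => iteratedDeriv j h t) := by
      intro k hk
      obtain ⟨hk1, hk2⟩ := Finset.mem_Ico.mp hk
      rw [← Finset.mul_sum, Finset.Ico_add_one_right_eq_Icc,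
        ← bellPoly_rec hk1 (by omega) (fun j => iteratedDeriv j h t)]
    rw [Finset.sum_congr rfl hinner]
    -- now massage the right-hand side
    have hsplit : Finset.Icc 1 (m + 1) = insert 1 (Finset.Icc 2 (m + 1)) := by
      ext a
      simp only [Finset.mem_Icc, Finset.mem_insert]
      omega
    rw [hsplit, Finset.sum_insert (by simp)]
    have hshift : (∑ k ∈ Finset.Icc 2 (m + 1),
          iteratedDeriv k f (h t) * bellPoly (m + 1) k (fun j => iteratedDeriv j h t))
        = ∑ k ∈ Finset.Icc 1 m,
            iteratedDeriv (k + 1) f (h t)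
              * bellPoly (m + 1) (k + 1) (fun j => iteratedDeriv j h t) := by
      have hmap : Finset.Icc 2 (m + 1) = (Finset.Icc 1 m).map (addRightEmbedding 1) := by
        rw [Finset.map_add_right_Icc]
      rw [hmap, Finset.sum_map]
      simp [addRightEmbedding]
    rw [hshift]
    have hone : iteratedDeriv 1 f (h t) * bellPoly (m + 1) 1 (fun j => iteratedDeriv j h t)
        = deriv f (h t) * iteratedDeriv (m + 1) h t := by
      rw [bellPoly_one (by omega), iteratedDeriv_one]
    rw [hone, Finset.Ico_add_one_right_eq_Icc]
    ring

theorem faa_di_bruno (n : ℕ) (hn : 1 ≤ n) (f h : ℝ → ℝ)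
    (hf : ContDiff ℝ n f) (hh : ContDiff ℝ n h) (t : ℝ) :
    iteratedDeriv n (f ∘ h) t =
      ∑ k ∈ Finset.Icc 1 n,
        iteratedDeriv k f (h t) * bellPoly n k (fun i => iteratedDeriv i h t) := by
  exact faa_aux n hn f h hf hh t
end
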